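/- arXiv:2302.03947 — 7 statements merged into one kernel-verified Lean document; each statement's English description precedes it below -/
import Mathlib

section
/- Let G be a finite group which is not perfect (i.e. its commutator subgroup is a proper subgroup), and suppose G is generated by k elements a_1, ..., a_k whose orders are pairwise coprime. Then for every integer n ≥ k, the rank of the direct power G^n equals n. -/
/-- Counting lemma: a commutative group of exponent dividing `p` generated by `r`
elements has cardinality at most `p ^ r`. -/
lemma aux_card_le_pow_of_gen {W : Type*} [CommGroup W] {p : ℕ} (hp : 1 < p)
    (hexp : ∀ x : W, x ^ p = 1) {r : ℕ} (σ : Fin r → W)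
    (hgen : Subgroup.closure (Set.range σ) = ⊤) :
    Nat.card W ≤ p ^ r := by
  classical
  haveI : NeZero p := ⟨by omega⟩
  haveI : Fact (1 < p) := ⟨hp⟩
  set F : (Fin r → ZMod p) → W := fun c => ∏ i, σ i ^ (c i).val with hF
  have hmulpt : ∀ (x : W) (u v : ZMod p), x ^ p = 1 → x ^ (u + v).val = x ^ u.val * x ^ v.val := by
    intro x u v hx
    rw [ZMod.val_add, ← pow_eq_pow_mod _ hx, pow_add]
  have hFmul : ∀ c d, F (c + d) = F c * F d := by
    intro c d
    rw [hF, ← Finset.prod_mul_distrib]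
    refine Finset.prod_congr rfl fun i _ => ?_
    exact hmulpt _ _ _ (hexp _)
  have hFinv : ∀ c, F (-c) = (F c)⁻¹ := by
    intro c
    rw [eq_inv_iff_mul_eq_one, hF, ← Finset.prod_mul_distrib]
    refine Finset.prod_eq_one fun i _ => ?_
    rw [← hmulpt _ _ _ (hexp _)]
    simp
  have hsurj : Function.Surjective F := by
    intro w
    have hw : w ∈ Subgroup.closure (Set.range σ) := by rw [hgen]; trivial
    induction hw using Subgroup.closure_induction with
    | mem x hx =>
        obtain ⟨i, rfl⟩ := hx
        refine ⟨Pi.single i 1, ?_⟩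
        show ∏ j, σ j ^ ((Pi.single i 1 : Fin r → ZMod p) j).val = σ i
        rw [Finset.prod_eq_single i]
        · simp [ZMod.val_one]
        · intro j _ hj
          simp [Pi.single_eq_of_ne hj]
        · simp
    | one => exact ⟨0, by simp [hF]⟩
    | mul x y hx hy ihx ihy =>
        obtain ⟨c, rfl⟩ := ihx
        obtain ⟨d, rfl⟩ := ihy
        exact ⟨c + d, hFmul c d⟩
    | inv x hx ihx =>
        obtain ⟨c, rfl⟩ := ihx
        exact ⟨-c, hFinv c⟩
  calc Nat.card W ≤ Nat.card (Fin r → ZMod p) := Nat.card_le_card_of_surjective F hsurj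
    _ = p ^ r := by simp [Nat.card_pi, Nat.card_zmod]

/-- Lower bound: for a finite imperfect group, `G^n` needs at least `n` generators. -/
lemma aux_rank_lower (G : Type*) [Group G] [Finite G] (himperfect : commutator G ≠ ⊤)
    (n : ℕ) : n ≤ Group.rank (Fin n → G) := by
  classical
  set Q := Abelianization G with hQ
  haveI : Finite Q := Quotient.finite _
  haveI hQnt : Nontrivial Q := by
    by_contra h
    rw [not_nontrivial_iff_subsingleton] at h
    apply himperfect
    rw [eq_top_iff]
    intro g _
    haveI h2 : Subsingleton (G ⧸ commutator G) := h
    exact (QuotientGroup.eq_one_iff g).mp (Subsingleton.elim _ _)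
  set p := (Nat.card Q).minFac with hpdef
  have hQcard : 1 < Nat.card Q := Finite.one_lt_card
  have hpp : p.Prime := Nat.minFac_prime (by omega)
  haveI : Fact p.Prime := ⟨hpp⟩
  set Hp := (powMonoidHom p : Q →* Q).range with hHp
  have hexp : ∀ x : Q ⧸ Hp, x ^ p = 1 := by
    intro x
    refine QuotientGroup.induction_on x fun q => ?_
    have h1 : ((q : Q ⧸ Hp)) ^ p = ((q ^ p : Q) : Q ⧸ Hp) :=
      ((QuotientGroup.mk' Hp).map_pow q p).symm
    rw [h1, QuotientGroup.eq_one_iff]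
    exact ⟨q, rfl⟩
  obtain ⟨g, hg⟩ := exists_prime_orderOf_dvd_card' (G := Q) p (Nat.minFac_dvd _)
  haveI : Finite (Q ⧸ Hp) := Quotient.finite _
  haveI : Nontrivial (Q ⧸ Hp) := by
    by_contra h
    rw [not_nontrivial_iff_subsingleton] at h
    have hsurj : Function.Surjective (powMonoidHom p : Q →* Q) := by
      intro q
      have h1 : (q : Q ⧸ Hp) = 1 := Subsingleton.elim _ _
      exact (QuotientGroup.eq_one_iff q).mp h1
    have hinj := Finite.injective_iff_surjective.mpr hsurj
    have hg1 : g = 1 := by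
      apply hinj
      show g ^ p = 1 ^ p
      rw [one_pow, ← hg, pow_orderOf_eq_one]
    rw [hg1, orderOf_one] at hg
    exact hpp.one_lt.ne' hg.symm
  have hcardQp : p ≤ Nat.card (Q ⧸ Hp) := by
    obtain ⟨x, hx⟩ := exists_ne (1 : Q ⧸ Hp)
    have h1 : orderOf x ∣ p := orderOf_dvd_of_pow_eq_one (hexp x)
    have h2 : orderOf x = p :=
      (hpp.eq_one_or_self_of_dvd _ h1).resolve_left (by simpa [orderOf_eq_one_iff] using hx)
    calc p = orderOf x := h2.symm
      _ ≤ Nat.card (Q ⧸ Hp) := Nat.le_of_dvd Nat.card_pos (orderOf_dvd_natCard x)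
  set φ : G →* Q ⧸ Hp := (QuotientGroup.mk' Hp).comp Abelianization.of with hφdef
  have hφ : Function.Surjective φ :=
    (QuotientGroup.mk'_surjective Hp).comp fun x => QuotientGroup.induction_on x fun g => ⟨g, rfl⟩
  set Φ : (Fin n → G) →* (Fin n → Q ⧸ Hp) := φ.compLeft (Fin n) with hΦdef
  have hΦ : Function.Surjective Φ := by
    intro w
    choose f hf using fun t => hφ (w t)
    exact ⟨f, funext hf⟩
  obtain ⟨S, hScard, hSgen⟩ := Group.rank_spec (Fin n → G)
  set T := S.image Φ with hT
  have hTgen : Subgroup.closure (T : Set (Fin n → Q ⧸ Hp)) = ⊤ := by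
    rw [hT, Finset.coe_image, ← MonoidHom.map_closure, hSgen]
    exact Subgroup.map_top_of_surjective Φ hΦ
  set σ : Fin T.card → (Fin n → Q ⧸ Hp) := fun j => (T.equivFin.symm j : _) with hσ
  have hrange : Set.range σ = (T : Set (Fin n → Q ⧸ Hp)) := by
    have h1 : Set.range σ = Set.range (fun x : T => (x : Fin n → Q ⧸ Hp)) :=
      Function.Surjective.range_comp T.equivFin.symm.surjective _
    rw [h1, Subtype.range_coe_subtype]
    simp
  have hexpW : ∀ x : Fin n → Q ⧸ Hp, x ^ p = 1 := fun x => funext fun t => hexp (x t)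
  have hcount := aux_card_le_pow_of_gen hpp.one_lt hexpW σ (by rw [hrange]; exact hTgen)
  have hW : p ^ n ≤ Nat.card (Fin n → Q ⧸ Hp) := by
    rw [Nat.card_pi, Finset.prod_const, Finset.card_univ, Fintype.card_fin]
    exact Nat.pow_le_pow_left hcardQp n
  have h1 : n ≤ T.card := (Nat.pow_le_pow_iff_right hpp.one_lt).mp (le_trans hW hcount)
  calc n ≤ T.card := h1
    _ ≤ S.card := Finset.card_image_le
    _ = Group.rank (Fin n → G) := hScard

/-- Upper bound: `G^n` is generated by `n` elements. -/
lemma aux_rank_upper (G : Type*) [Group G] [Finite G] (k : ℕ) (a : Fin k → G)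
    (hgen : Subgroup.closure (Set.range a) = ⊤)
    (hcoprime : ∀ i j : Fin k, i ≠ j → Nat.Coprime (orderOf (a i)) (orderOf (a j)))
    (n : ℕ) (hn : k ≤ n) (hn0 : 0 < n) :
    Group.rank (Fin n → G) ≤ n := by
  classical
  set pos : Fin n → Fin k → Fin n := fun s i => ⟨(s.val + i.val) % n, Nat.mod_lt _ hn0⟩ with hpos
  have hposinj : ∀ s, Function.Injective (pos s) := by
    intro s i j hij
    have h1 : (s.val + i.val) % n = (s.val + j.val) % n := congrArg Fin.val hij
    have hi : i.val < n := lt_of_lt_of_le i.isLt hn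
    have hj : j.val < n := lt_of_lt_of_le j.isLt hn
    have h2 : i.val ≡ j.val [MOD n] := Nat.ModEq.add_left_cancel' s.val h1
    have h3 : i.val % n = j.val % n := h2
    exact Fin.ext (by rwa [Nat.mod_eq_of_lt hi, Nat.mod_eq_of_lt hj] at h3)
  set b : Fin n → (Fin n → G) := fun s t => if h : ∃ i, pos s i = t then a h.choose else 1 with hb
  have hb_at : ∀ s i, b s (pos s i) = a i := by
    intro s i
    have hex : ∃ j, pos s j = pos s i := ⟨i, rfl⟩
    show (if h : ∃ j, pos s j = pos s i then a h.choose else 1) = a i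
    rw [dif_pos hex]
    exact congrArg a (hposinj s hex.choose_spec)
  have hb_not : ∀ s t, (∀ i, t ≠ pos s i) → b s t = 1 := by
    intro s t ht
    show (if h : ∃ j, pos s j = t then a h.choose else 1) = 1
    exact dif_neg fun ⟨j, hj⟩ => ht j hj.symm
  set H := Subgroup.closure (Set.range b) with hH
  have hsingle : ∀ (i : Fin k) (t : Fin n), Pi.mulSingle t (a i) ∈ H := by
    intro i t
    have hi : i.val < n := lt_of_lt_of_le i.isLt hn
    obtain ⟨s, hs⟩ : ∃ s : Fin n, pos s i = t := by
      refine ⟨⟨(t.val + (n - i.val)) % n, Nat.mod_lt _ hn0⟩, ?_⟩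
      apply Fin.ext
      show ((t.val + (n - i.val)) % n + i.val) % n = t.val
      rw [Nat.mod_add_mod]
      have h4 : t.val + (n - i.val) + i.val = t.val + n := by omega
      rw [h4, Nat.add_mod_right, Nat.mod_eq_of_lt t.isLt]
    set P : ℕ := ∏ j ∈ Finset.univ.erase i, orderOf (a j) with hPdef
    have hcop : Nat.Coprime P (orderOf (a i)) :=
      Nat.Coprime.prod_left fun j hj => hcoprime j i (Finset.ne_of_mem_erase hj)
    obtain ⟨u, v, huv⟩ := hcop.isCoprime
    set c : ℤ := u * (P : ℤ) with hc
    have hci : a i ^ c = a i := by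
      have h1 : c = 1 - v * (orderOf (a i) : ℤ) := by rw [hc]; linarith [huv]
      rw [h1, zpow_sub, zpow_one, mul_comm v, zpow_mul, zpow_natCast, pow_orderOf_eq_one,
        one_zpow, inv_one, mul_one]
    have hcj : ∀ j : Fin k, j ≠ i → a j ^ c = 1 := by
      intro j hj
      have hdvd : orderOf (a j) ∣ P :=
        Finset.dvd_prod_of_mem _ (Finset.mem_erase.mpr ⟨hj, Finset.mem_univ j⟩)
      have h1 : a j ^ (P : ℤ) = 1 := by
        rw [zpow_natCast]
        exact orderOf_dvd_iff_pow_eq_one.mp hdvd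
      rw [hc, mul_comm, zpow_mul, h1, one_zpow]
    have hkey : Pi.mulSingle t (a i) = (b s) ^ c := by
      funext t'
      have happ : ((b s) ^ c) t' = (b s t') ^ c := rfl
      rw [happ]
      by_cases h1 : t' = t
      · subst h1
        rw [Pi.mulSingle_eq_same, ← hs, hb_at s i, hci]
      · rw [Pi.mulSingle_eq_of_ne h1]
        by_cases h2 : ∃ j, t' = pos s j
        · obtain ⟨j, rfl⟩ := h2
          have hji : j ≠ i := fun h => h1 (by rw [h, hs])
          rw [hb_at s j, hcj j hji]
        · push_neg at h2
          rw [hb_not s t' h2, one_zpow]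
    rw [hkey]
    exact Subgroup.zpow_mem H (Subgroup.subset_closure ⟨s, rfl⟩) c
  have hallsingle : ∀ (t : Fin n) (g : G), Pi.mulSingle t g ∈ H := by
    intro t g
    have hle : (⊤ : Subgroup G) ≤
        Subgroup.comap (MonoidHom.mulSingle (fun _ : Fin n => G) t) H := by
      rw [← hgen, Subgroup.closure_le]
      rintro x ⟨i, rfl⟩
      exact hsingle i t
    exact hle (Subgroup.mem_top g)
  have hHtop : H = ⊤ := by
    rw [eq_top_iff]
    intro f _
    exact Subgroup.pi_mem_of_mulSingle_mem f fun t => hallsingle t (f t)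
  have hclosure : Subgroup.closure
      ((Finset.univ.image b : Finset (Fin n → G)) : Set (Fin n → G)) = ⊤ := by
    rw [Finset.coe_image, Finset.coe_univ, Set.image_univ, ← hH]
    exact hHtop
  calc Group.rank (Fin n → G) ≤ (Finset.univ.image b).card := Group.rank_le hclosure
    _ ≤ (Finset.univ : Finset (Fin n)).card := Finset.card_image_le
    _ = n := by simp

/-- If `G` is a finite imperfect group generated by `k` elements of mutually coprime
orders, then `rank (G^n) = n` for all `n ≥ k`. -/
theorem rank_pi_eq_of_imperfect (G : Type*) [Group G] [Finite G]
    (himperfect : commutator G ≠ ⊤)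
    (k : ℕ) (a : Fin k → G)
    (hgen : Subgroup.closure (Set.range a) = ⊤)
    (hcoprime : ∀ i j : Fin k, i ≠ j → Nat.Coprime (orderOf (a i)) (orderOf (a j)))
    (n : ℕ) (hn : k ≤ n) :
    Group.rank (Fin n → G) = n := by
  have hk0 : 0 < k := by
    rcases Nat.eq_zero_or_pos k with hk | hk
    · subst hk
      exfalso
      apply himperfect
      have hbot : (⊥ : Subgroup G) = ⊤ := by
        rw [← hgen, Set.range_eq_empty, Subgroup.closure_empty]
      exact top_le_iff.mp (hbot ▸ bot_le)
    · exact hk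
  exact le_antisymm (aux_rank_upper G k a hgen hcoprime n hn (lt_of_lt_of_le hk0 hn))
    (aux_rank_lower G himperfect n)
end

section
/- For every integer n ≥ 2, the rank of the direct power A_4^n of the alternating group A_4 equals n. -/
open Equiv Equiv.Perm Subgroup

private abbrev pT : Perm (Fin 4) := swap 0 1 * swap 1 2
private abbrev pS : Perm (Fin 4) := swap 0 1 * swap 2 3
private abbrev pS2 : Perm (Fin 4) := swap 0 2 * swap 1 3
private abbrev pS3 : Perm (Fin 4) := swap 0 3 * swap 1 2

private def fcos (σ : Perm (Fin 4)) : ZMod 3 :=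
  if σ = 1 ∨ σ = pS ∨ σ = pS2 ∨ σ = pS3 then 0
  else if σ = pT ∨ σ = pT*pS ∨ σ = pT*pS2 ∨ σ = pT*pS3 then 1
  else 2

private lemma fcos_mul : ∀ a b : Perm (Fin 4), sign a = 1 → sign b = 1 →
    fcos (a*b) = fcos a + fcos b := by decide

private abbrev G4 := ↥(alternatingGroup (Fin 4))

private lemma pT_mem : pT ∈ alternatingGroup (Fin 4) := by
  rw [mem_alternatingGroup]; decide

private lemma pS_mem : pS ∈ alternatingGroup (Fin 4) := by
  rw [mem_alternatingGroup]; decide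

private def T4 : G4 := ⟨pT, pT_mem⟩
private def S4 : G4 := ⟨pS, pS_mem⟩

private lemma three_cycle_cases : ∀ σ : Perm (Fin 4), σ.IsThreeCycle →
    σ = pT ∨ σ = pT⁻¹ ∨ σ = pS*pT*pS ∨ σ = pS*pT⁻¹*pS ∨ σ = pT*pS ∨ σ = (pT*pS)⁻¹ ∨
    σ = pS*pT ∨ σ = (pS*pT)⁻¹ := by
  simp only [Equiv.Perm.IsThreeCycle]
  decide

private lemma closure_TS : Subgroup.closure ({T4, S4} : Set G4) = ⊤ := by
  have hA : alternatingGroup (Fin 4) ≤ Subgroup.closure ({pT, pS} : Set (Perm (Fin 4))) := by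
    rw [← closure_three_cycles_eq_alternating, closure_le]
    intro σ hσ
    have ht : pT ∈ closure ({pT, pS} : Set (Perm (Fin 4))) := subset_closure (by simp)
    have hs : pS ∈ closure ({pT, pS} : Set (Perm (Fin 4))) := subset_closure (by simp)
    rcases three_cycle_cases σ hσ with rfl|rfl|rfl|rfl|rfl|rfl|rfl|rfl
    · exact ht
    · exact inv_mem ht
    · exact mul_mem (mul_mem hs ht) hs
    · exact mul_mem (mul_mem hs (inv_mem ht)) hs
    · exact mul_mem ht hs
    · exact inv_mem (mul_mem ht hs)
    · exact mul_mem hs ht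
    · exact inv_mem (mul_mem hs ht)
  have hmap : (Subgroup.closure ({T4, S4} : Set G4)).map (alternatingGroup (Fin 4)).subtype
      = Subgroup.closure ({pT, pS} : Set (Perm (Fin 4))) := by
    rw [MonoidHom.map_closure]
    congr 1
    simp [Set.image_insert_eq, T4, S4]
  rw [eq_top_iff']
  intro x
  have hx : (x : Perm (Fin 4)) ∈ Subgroup.closure ({pT, pS} : Set (Perm (Fin 4))) := hA x.2
  rw [← hmap] at hx
  obtain ⟨y, hy, hyx⟩ := hx
  rwa [show y = x from Subtype.ext hyx] at hy

private lemma T4_cube : T4 ^ 3 = 1 := by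
  apply Subtype.ext
  rw [SubmonoidClass.coe_pow, OneMemClass.coe_one]
  decide

private lemma S4_sq : S4 ^ 2 = 1 := by
  apply Subtype.ext
  rw [SubmonoidClass.coe_pow, OneMemClass.coe_one]
  decide

private lemma fcos_one : fcos 1 = 0 := by decide

/-- For every `n ≥ 2`, the rank of `A₄ⁿ` equals `n`. -/
theorem rank_pi_alternatingGroup_four (n : ℕ) (hn : 2 ≤ n) :
    Group.rank (Fin n → ↥(alternatingGroup (Fin 4))) = n := by
  haveI : NeZero n := ⟨by omega⟩
  have hone : (1 : Fin n) ≠ 0 := by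
    rw [Ne, Fin.one_eq_zero_iff]
    omega
  have hadd_ne : ∀ i : Fin n, i + 1 ≠ i := by
    intro i h
    apply hone
    have := congrArg (fun j => j - i) h
    simpa using this
  apply le_antisymm
  · -- upper bound
    set x : Fin n → (Fin n → G4) := fun i j => if j = i then T4 else if j = i + 1 then S4 else 1
      with hxdef
    set K := Subgroup.closure (Set.range x) with hK
    have hxmem : ∀ i, x i ∈ K := fun i => subset_closure ⟨i, rfl⟩
    have hx_eq : ∀ i, x i = Pi.mulSingle i T4 * Pi.mulSingle (i+1) S4 := by
      intro i
      funext j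
      simp only [hxdef, Pi.mul_apply]
      by_cases h1 : j = i
      · rw [if_pos h1, h1, Pi.mulSingle_eq_same,
          Pi.mulSingle_eq_of_ne (fun h : i = i + 1 => hadd_ne i h.symm), mul_one]
      · rw [if_neg h1, Pi.mulSingle_eq_of_ne h1, one_mul]
        by_cases h2 : j = i + 1
        · rw [if_pos h2, h2, Pi.mulSingle_eq_same]
        · rw [if_neg h2, Pi.mulSingle_eq_of_ne h2]
    have hx3 : ∀ i, (x i) ^ 3 = Pi.mulSingle (i+1) S4 := by
      intro i
      funext j
      simp only [Pi.pow_apply, hxdef]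
      by_cases h1 : j = i
      · rw [if_pos h1, h1, T4_cube,
          Pi.mulSingle_eq_of_ne (fun h : i = i + 1 => hadd_ne i h.symm)]
      · rw [if_neg h1]
        by_cases h2 : j = i + 1
        · rw [if_pos h2, h2, Pi.mulSingle_eq_same, pow_succ, S4_sq, one_mul]
        · rw [if_neg h2, one_pow, Pi.mulSingle_eq_of_ne h2]
    have hS : ∀ j : Fin n, (Pi.mulSingle j S4 : Fin n → G4) ∈ K := by
      intro j
      have := pow_mem (hxmem (j - 1)) 3
      rw [hx3] at this
      simpa using this
    have hT : ∀ i : Fin n, (Pi.mulSingle i T4 : Fin n → G4) ∈ K := by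
      intro i
      have := mul_mem (hxmem i) (inv_mem (hS (i+1)))
      rwa [hx_eq i, mul_inv_cancel_right] at this
    have hsingle : ∀ (j : Fin n) (g : G4), (Pi.mulSingle j g : Fin n → G4) ∈ K := by
      intro j g
      have hg : g ∈ Subgroup.closure ({T4, S4} : Set G4) := by rw [closure_TS]; trivial
      have hmem : Pi.mulSingle j g ∈
          (Subgroup.closure ({T4, S4} : Set G4)).map (MonoidHom.mulSingle (fun _ : Fin n => G4) j) :=
        ⟨g, hg, rfl⟩
      rw [MonoidHom.map_closure] at hmem
      refine Subgroup.closure_le K |>.2 ?_ hmem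
      intro y hy
      rcases hy with ⟨z, hz, rfl⟩
      rcases hz with rfl | hz
      · exact hT j
      · rcases hz with rfl
        exact hS j
    have htop : K = ⊤ := by
      rw [eq_top_iff']
      intro f
      exact Subgroup.pi_mem_of_mulSingle_mem f fun j => hsingle j (f j)
    have hfin : Subgroup.closure ((Finset.image x Finset.univ : Finset (Fin n → G4)) : Set (Fin n → G4)) = ⊤ := by
      rw [Finset.coe_image, Finset.coe_univ, Set.image_univ, ← hK, htop]
    calc Group.rank (Fin n → G4) ≤ (Finset.image x Finset.univ).card := Group.rank_le hfin
      _ ≤ Finset.univ.card := Finset.card_image_le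
      _ = n := by simp
  · -- lower bound
    have hfc : ∀ c : ZMod 3, ∃ g : G4, fcos (g : Perm (Fin 4)) = c := by
      intro c
      fin_cases c
      · exact ⟨1, by change fcos _ = (0 : ZMod 3); decide⟩
      · exact ⟨T4, by change fcos _ = (1 : ZMod 3); decide⟩
      · exact ⟨T4 * T4, by change fcos _ = (2 : ZMod 3); decide⟩
    let Φ : (Fin n → G4) →* Multiplicative (Fin n → ZMod 3) :=
      { toFun := fun f => Multiplicative.ofAdd (fun i => fcos ((f i : Perm (Fin 4))))
        map_one' := by
          apply congrArg Multiplicative.ofAdd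
          funext i
          exact fcos_one
        map_mul' := by
          intro f g
          apply congrArg Multiplicative.ofAdd
          funext i
          exact fcos_mul _ _ (mem_alternatingGroup.1 (f i).2) (mem_alternatingGroup.1 (g i).2) }
    have hΦ : Function.Surjective Φ := by
      intro z
      choose g hg using fun i => hfc (Multiplicative.toAdd z i)
      refine ⟨g, ?_⟩
      apply congrArg Multiplicative.ofAdd (funext hg)
    have h1 : Group.rank (Multiplicative (Fin n → ZMod 3)) ≤ Group.rank (Fin n → G4) :=
      Group.rank_le_of_surjective Φ hΦ
    refine le_trans ?_ h1
    obtain ⟨Sf, hcard, htop⟩ := Group.rank_spec (Multiplicative (Fin n → ZMod 3))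
    set p : Submodule (ZMod 3) (Fin n → ZMod 3) :=
      Submodule.span (ZMod 3) (⇑Multiplicative.toAdd '' (Sf : Set (Multiplicative (Fin n → ZMod 3))))
    have hle : Subgroup.closure (Sf : Set (Multiplicative (Fin n → ZMod 3)))
        ≤ AddSubgroup.toSubgroup p.toAddSubgroup := by
      rw [Subgroup.closure_le]
      intro y hy
      have hy2 : Multiplicative.toAdd y ∈ p := Submodule.subset_span ⟨y, hy, rfl⟩
      exact hy2
    have hp_top : p = ⊤ := by
      rw [eq_top_iff]
      intro m _
      have : Multiplicative.ofAdd m ∈ Subgroup.closure (Sf : Set (Multiplicative (Fin n → ZMod 3))) := by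
        rw [htop]; trivial
      have h2 : Multiplicative.ofAdd m ∈ AddSubgroup.toSubgroup p.toAddSubgroup := hle this
      exact h2
    have hrank : n ≤ Sf.card := by
      have hv : Submodule.span (ZMod 3)
          (Set.range (fun s : Sf => Multiplicative.toAdd (s : Multiplicative (Fin n → ZMod 3)))) = ⊤ := by
        have : Set.range (fun s : Sf => Multiplicative.toAdd (s : Multiplicative (Fin n → ZMod 3)))
            = ⇑Multiplicative.toAdd '' (Sf : Set (Multiplicative (Fin n → ZMod 3))) := by
          ext m
          constructor
          · rintro ⟨s, rfl⟩; exact ⟨s, s.2, rfl⟩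
          · rintro ⟨y, hy, rfl⟩; exact ⟨⟨y, hy⟩, rfl⟩
        rw [this]
        exact hp_top
      have := finrank_le_of_span_eq_top hv
      rwa [Module.finrank_pi, Fintype.card_fin, Fintype.card_coe] at this
    omega
end

section
/- For every integer n ≥ 2 there exists a generating set C of A_4^n with |C| = n (hence of minimum size, since rank(A_4^n) = n) such that every element of A_4^n is a product of at most 10n elements of C; that is, diam(A_4^n, C) ≤ 10n. -/
/-- The length of `g` with respect to the set `A`: the least `n` such that `g` is a
product of `n` elements of `A` (so the identity has length `0`). -/
noncomputable def wordLength {G : Type*} [Group G] (A : Set G) (g : G) : ℕ :=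
  sInf {n : ℕ | ∃ l : List G, l.length = n ∧ (∀ x ∈ l, x ∈ A) ∧ l.prod = g}

/-- The diameter of the group `G` with respect to the set `A`. -/
noncomputable def diam (G : Type*) [Group G] (A : Set G) : ℕ :=
  ⨆ g : G, wordLength A g

namespace DiamA4Aux

abbrev A4 := ↥(alternatingGroup (Fin 4))

def aP : Equiv.Perm (Fin 4) := Equiv.swap 0 1 * Equiv.swap 1 2
def bP : Equiv.Perm (Fin 4) := Equiv.swap 0 1 * Equiv.swap 2 3

lemma aP_mem : aP ∈ alternatingGroup (Fin 4) := by
  rw [Equiv.Perm.mem_alternatingGroup]; decide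

lemma bP_mem : bP ∈ alternatingGroup (Fin 4) := by
  rw [Equiv.Perm.mem_alternatingGroup]; decide

def a : A4 := ⟨aP, aP_mem⟩
def b : A4 := ⟨bP, bP_mem⟩

/-- evaluation of a boolean word, `true ↦ p`, `false ↦ q`. -/
def evP (p q : Equiv.Perm (Fin 4)) (w : List Bool) : Equiv.Perm (Fin 4) :=
  (w.map (fun t => if t then p else q)).prod

def table : List ((Fin 4 × Fin 4 × Fin 4) × List Bool) :=
  [ ((0, 1, 2), []),
    ((0, 2, 3), [true, true, false, false, false]),
    ((0, 3, 1), [true, true, true, false, false, false, true]),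
    ((1, 0, 3), [false, false, false]),
    ((1, 2, 0), [true, true, true, true]),
    ((1, 3, 2), [true, false, false, false, true]),
    ((2, 0, 1), [true, true]),
    ((2, 1, 3), [true, true, true, true, false, false, false]),
    ((2, 3, 0), [true, true, true, true, true, false, false, false, true]),
    ((3, 0, 2), [true, true, false, true, true, false, false]),
    ((3, 1, 0), [false, true, true, false, false]),
    ((3, 2, 1), [true, true, true, true, false, true, true, false, false]) ]

def W' (p : Equiv.Perm (Fin 4)) : List Bool :=
  ((table.find? (fun e => e.1 = (p 0, p 1, p 2))).map Prod.snd).getD []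

lemma W'_spec : ∀ p : Equiv.Perm (Fin 4),
    (W' p).length ≤ 10 ∧ (W' p).count true % 2 = 0 ∧ (W' p).count false % 3 = 0 ∧
      evP bP aP (W' p) = 1 ∧ (Equiv.Perm.sign p = 1 → evP aP bP (W' p) = p) := by
  decide

def W (g : A4) : List Bool := W' g.val

def ev (p q : A4) (w : List Bool) : A4 := (w.map (fun t => if t then p else q)).prod

lemma ev_val (p q : A4) (w : List Bool) : (ev p q w).val = evP p.val q.val w := by
  unfold ev evP
  induction w with
  | nil => rfl
  | cons t l ih =>
      cases t <;> simp only [List.map_cons, List.prod_cons, Subgroup.coe_mul, if_true,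
        if_false, Bool.false_eq_true, ih]

lemma W_length (g : A4) : (W g).length ≤ 10 := (W'_spec g.val).1
lemma W_count_true (g : A4) : (W g).count true % 2 = 0 := (W'_spec g.val).2.1
lemma W_count_false (g : A4) : (W g).count false % 3 = 0 := (W'_spec g.val).2.2.1
lemma W_ev_ba (g : A4) : ev b a (W g) = 1 := by
  apply Subtype.ext
  rw [ev_val]
  exact (W'_spec g.val).2.2.2.1
lemma W_ev_ab (g : A4) : ev a b (W g) = g := by
  apply Subtype.ext
  rw [ev_val]
  exact (W'_spec g.val).2.2.2.2 (Equiv.Perm.mem_alternatingGroup.mp g.property)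

lemma prod_map_ite_one_right (p : A4) (w : List Bool) :
    (w.map (fun t => if t then p else 1)).prod = p ^ (w.count true) := by
  induction w with
  | nil => simp
  | cons t l ih =>
      cases t <;> simp [ih, List.count_cons, pow_succ']

lemma prod_map_ite_one_left (q : A4) (w : List Bool) :
    (w.map (fun t => if t then 1 else q)).prod = q ^ (w.count false) := by
  induction w with
  | nil => simp
  | cons t l ih =>
      cases t <;> simp [ih, List.count_cons, pow_succ']

lemma b_pow_even {k : ℕ} (hk : k % 2 = 0) : b ^ k = 1 := by
  have : b ^ 2 = 1 := by decide
  calc b ^ k = b ^ (2 * (k / 2) + k % 2) := by rw [Nat.div_add_mod]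
  _ = 1 := by rw [hk, add_zero, pow_mul, this, one_pow]

lemma a_pow_three {k : ℕ} (hk : k % 3 = 0) : a ^ k = 1 := by
  have : a ^ 3 = 1 := by decide
  calc a ^ k = a ^ (3 * (k / 3) + k % 3) := by rw [Nat.div_add_mod]
  _ = 1 := by rw [hk, add_zero, pow_mul, this, one_pow]

/-- product over a nodup list of a function supported at one point. -/
lemma prod_map_support_single {ι M : Type*} [Monoid M] [DecidableEq ι]
    (l : List ι) (hl : l.Nodup) (j : ι) (hj : j ∈ l) (f : ι → M)
    (h1 : ∀ i ∈ l, i ≠ j → f i = 1) : (l.map f).prod = f j := by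
  induction l with
  | nil => simp at hj
  | cons i l ih =>
      rcases List.mem_cons.mp hj with h | h
      · subst h
        have : ∀ k ∈ l, f k = 1 := fun k hk =>
          h1 k (List.mem_cons_of_mem _ hk) (fun hkj => (List.nodup_cons.mp hl).1 (hkj ▸ hk))
        have hprod : (l.map f).prod = 1 :=
          List.prod_eq_one (fun x hx => by
            rcases List.mem_map.mp hx with ⟨k, hk, rfl⟩; exact this k hk)
        simp [hprod]
      · have hij : i ≠ j := fun hij => (List.nodup_cons.mp hl).1 (hij ▸ h)
        have : f i = 1 := h1 i List.mem_cons_self hij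
        simp [this, ih (List.nodup_cons.mp hl).2 h
          (fun k hk hkj => h1 k (List.mem_cons_of_mem _ hk) hkj)]

section Main

variable (m : ℕ)

def xgen (i : Fin (m + 2)) : Fin (m + 2) → A4 :=
  fun j => if j = i then a else if j = i + 1 then b else 1

lemma a_ne_b : a ≠ b := by decide
lemma a_ne_one : a ≠ (1 : A4) := by decide

lemma xgen_inj : Function.Injective (xgen m) := by
  intro i i' h
  have h0 := congrFun h i
  simp only [xgen, if_pos rfl] at h0
  by_contra hne
  rw [if_neg hne] at h0
  by_cases h1 : i = i' + 1
  · rw [if_pos h1] at h0; exact a_ne_b h0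
  · rw [if_neg h1] at h0; exact a_ne_one h0

end Main

end DiamA4Aux

open DiamA4Aux in
/-- For every `n ≥ 2` there is a generating set `C` of `A₄ⁿ` of size `n`
(the minimum, since `rank (A₄ⁿ) = n`) such that `diam (A₄ⁿ, C) ≤ 10 n`. -/
theorem diam_pi_alternatingGroup_four (n : ℕ) (hn : 2 ≤ n) :
    ∃ C : Finset (Fin n → ↥(alternatingGroup (Fin 4))),
      C.card = n ∧
      Subgroup.closure (C : Set (Fin n → ↥(alternatingGroup (Fin 4)))) = ⊤ ∧
      diam (Fin n → ↥(alternatingGroup (Fin 4))) (C : Set (Fin n → ↥(alternatingGroup (Fin 4)))) ≤ 10 * n := by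
  obtain ⟨m, rfl⟩ : ∃ m, n = m + 2 := ⟨n - 2, by omega⟩
  clear hn
  set G := (Fin (m + 2) → A4) with hG
  set C : Finset G := Finset.image (xgen m) Finset.univ with hC
  -- the key word lemma
  have key : ∀ g : G, ∃ l : List G, (∀ y ∈ l, y ∈ (C : Set G)) ∧
      l.prod = g ∧ l.length ≤ 10 * (m + 2) := by
    intro g
    set blk : Fin (m + 2) → List G := fun i =>
      (W (g i)).map (fun t => if t then xgen m i else xgen m (i - 1)) with hblk
    refine ⟨((List.finRange (m + 2)).map blk).flatten, ?_, ?_, ?_⟩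
    · intro y hy
      rw [List.mem_flatten] at hy
      obtain ⟨l', hl', hyl'⟩ := hy
      rw [List.mem_map] at hl'
      obtain ⟨i, _, rfl⟩ := hl'
      rw [hblk] at hyl'
      simp only [List.mem_map] at hyl'
      obtain ⟨t, _, rfl⟩ := hyl'
      cases t <;> simp [hC]
    · -- the product is g
      rw [List.prod_flatten, List.map_map]
      funext j
      rw [Pi.list_prod_apply, List.map_map]
      have hblkprod : ∀ i : Fin (m + 2),
          ((List.prod ∘ blk) i) j = if j = i then g i else 1 := by
        intro i
        have hsub : (i - 1) + 1 = i := sub_add_cancel i 1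
        simp only [Function.comp_apply, hblk]
        rw [Pi.list_prod_apply, List.map_map]
        have hmapeq : ((fun f : G => f j) ∘ fun t => if t then xgen m i else xgen m (i - 1))
            = fun t : Bool => if t then xgen m i j else xgen m (i - 1) j := by
          funext t; cases t <;> rfl
        rw [hmapeq]
        by_cases hji : j = i
        · subst hji
          have h1 : xgen m j j = a := by simp [xgen]
          have h2 : xgen m (j - 1) j = b := by
            have hne : j ≠ j - 1 := by
              intro hcontra
              have h11 : j + 1 = j := by
                conv_lhs => rw [hcontra]
                exact hsub
              have h12 : (1 : Fin (m + 2)) = 0 := by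
                have := h11.trans (add_zero j).symm
                exact add_left_cancel this
              exact one_ne_zero h12
            simp [xgen, hsub, hne]
          rw [h1, h2, if_pos rfl]
          exact W_ev_ab (g j)
        · rw [if_neg hji]
          have h1 : xgen m i j = if j = i + 1 then b else 1 := by
            simp [xgen, hji]
          have h2 : xgen m (i - 1) j = if j = i - 1 then a else 1 := by
            simp [xgen, hsub, hji]
          rw [h1, h2]
          by_cases hj1 : j = i + 1 <;> by_cases hj2 : j = i - 1
          · simp only [if_pos hj1, if_pos hj2]
            exact W_ev_ba (g i)
          · simp only [if_pos hj1, if_neg hj2]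
            rw [prod_map_ite_one_right]
            exact b_pow_even (W_count_true (g i))
          · simp only [if_neg hj1, if_pos hj2]
            rw [prod_map_ite_one_left]
            exact a_pow_three (W_count_false (g i))
          · simp only [if_neg hj1, if_neg hj2]
            rw [prod_map_ite_one_right]
            exact one_pow _
      calc ((List.finRange (m + 2)).map ((fun f : G => f j) ∘ (List.prod ∘ blk))).prod
          = ((List.finRange (m + 2)).map (fun i => if j = i then g i else 1)).prod := by
            congr 1; exact List.map_congr_left (fun i _ => hblkprod i)
        _ = g j := by
            have := prod_map_support_single (List.finRange (m + 2)) (List.nodup_finRange _)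
              j (List.mem_finRange j) (fun i => if j = i then g i else 1)
              (fun i _ hij => if_neg (fun hji => hij hji.symm))
            rw [this]
            simp
    · -- length bound
      rw [List.length_flatten, List.map_map]
      have hle : ∀ x ∈ (List.finRange (m + 2)).map (List.length ∘ blk), x ≤ 10 := by
        intro x hx
        rw [List.mem_map] at hx
        obtain ⟨i, _, rfl⟩ := hx
        simp only [Function.comp_apply, hblk, List.length_map]
        exact W_length (g i)
      calc ((List.finRange (m + 2)).map (List.length ∘ blk)).sum
          ≤ ((List.finRange (m + 2)).map (List.length ∘ blk)).length • 10 :=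
            List.sum_le_card_nsmul _ 10 hle
        _ = 10 * (m + 2) := by
            simp [List.length_finRange, Nat.smul_one_eq_cast, mul_comm]
  refine ⟨C, ?_, ?_, ?_⟩
  · rw [hC, Finset.card_image_of_injective _ (xgen_inj m), Finset.card_univ,
      Fintype.card_fin]
  · rw [eq_top_iff]
    intro g _
    obtain ⟨l, hmem, hprod, _⟩ := key g
    rw [← hprod]
    exact Subgroup.list_prod_mem _ (fun x hx => Subgroup.subset_closure (hmem x hx))
  · apply ciSup_le
    intro g
    obtain ⟨l, hmem, hprod, hlen⟩ := key g
    unfold wordLength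
    exact le_trans (Nat.sInf_le ⟨l, rfl, hmem, hprod⟩) hlen
end

section
/- Let G be a finite non-abelian simple group generated by n elements. A set of n tuples {(a_{i1}, a_{i2}, ..., a_{ik}) : i = 1, ..., n} generates the direct power G^k if and only if both of the following hold: (1) for each j = 1, ..., k, the set {a_{1j}, a_{2j}, ..., a_{nj}} generates G; and (2) there is no automorphism f of G with f(a_{ij}) = a_{ij'} for all i = 1, ..., n, for any pair of distinct column indices j ≠ j'. -/
open Subgroup Function

section Aux

variable {G : Type*} [Group G]

private lemma hall_column (n k : ℕ) (a : Fin n → Fin k → G)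
    (hH : Subgroup.closure (Set.range a) = ⊤) (j : Fin k) :
    Subgroup.closure (Set.range fun i : Fin n => a i j) = ⊤ := by
  have hsurj : Function.Surjective (Pi.evalMonoidHom (fun _ : Fin k => G) j) :=
    fun y => ⟨fun _ => y, rfl⟩
  have h1 := Subgroup.map_top_of_surjective _ hsurj
  rw [← h1, ← hH, MonoidHom.map_closure]
  congr 1
  rw [← Set.range_comp]
  rfl

private lemma hall_noauto (n k : ℕ) (a : Fin n → Fin k → G)
    (hna : ∃ x y : G, x * y ≠ y * x)
    (hH : Subgroup.closure (Set.range a) = ⊤) {j j' : Fin k} (hjj : j ≠ j') :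
    ¬∃ f : G ≃* G, ∀ i : Fin n, f (a i j) = a i j' := by
  rintro ⟨f, hf⟩
  set K : Subgroup (Fin k → G) :=
    MonoidHom.eqLocus ((f : G →* G).comp (Pi.evalMonoidHom (fun _ : Fin k => G) j))
      (Pi.evalMonoidHom (fun _ : Fin k => G) j') with hKdef
  have hK : ∀ g : Fin k → G, f (g j) = g j' := by
    intro g
    have hle : Subgroup.closure (Set.range a) ≤ K := by
      rw [Subgroup.closure_le]
      rintro _ ⟨i, rfl⟩
      exact hf i
    rw [hH] at hle
    exact hle (Subgroup.mem_top g)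
  obtain ⟨x, y, hxy⟩ := hna
  have hnt : Nontrivial G := ⟨x, 1, fun h => hxy (by subst h; simp)⟩
  obtain ⟨z, hz⟩ := exists_ne (f x)
  have h2 := hK (Function.update (Function.update (1 : Fin k → G) j x) j' z)
  rw [Function.update_of_ne hjj, Function.update_self, Function.update_self] at h2
  exact hz h2.symm

private lemma hall_aux [Finite G] [IsSimpleGroup G] (hna : ∃ x y : G, x * y ≠ y * x) :
    ∀ (k n : ℕ) (a : Fin n → Fin k → G),
      (∀ j : Fin k, Subgroup.closure (Set.range fun i : Fin n => a i j) = ⊤) →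
      (∀ j j' : Fin k, j ≠ j' → ¬∃ f : G ≃* G, ∀ i : Fin n, f (a i j) = a i j') →
      Subgroup.closure (Set.range a) = ⊤ := by
  have hnt : Nontrivial G := by
    obtain ⟨x, y, hxy⟩ := hna
    exact ⟨x, 1, fun h => hxy (by subst h; simp)⟩
  intro k
  induction k with
  | zero =>
    intro n a _ _
    rw [Subgroup.eq_top_iff']
    intro x
    have hx : x = 1 := funext fun j => j.elim0
    rw [hx]; exact one_mem _
  | succ k ih =>
    intro n a hcol hauto
    set H := Subgroup.closure (Set.range a) with hHdef
    set p : (Fin (k+1) → G) →* (Fin k → G) :=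
      MonoidHom.mk' (fun g j => g j.castSucc) (fun _ _ => rfl) with hpdef
    set a' : Fin n → Fin k → G := fun i j => a i j.castSucc with ha'def
    have hmem : ∀ i, a i ∈ H := fun i => Subgroup.subset_closure ⟨i, rfl⟩
    -- projection to first k coordinates is surjective from H
    have hpH : Subgroup.map p H = ⊤ := by
      have h1 : Subgroup.map p H = Subgroup.closure (Set.range a') := by
        rw [hHdef, MonoidHom.map_closure]
        congr 1
        rw [← Set.range_comp]
        rfl
      rw [h1]
      exact ih n a' (fun j => hcol j.castSucc)
        (fun j j' hjj => hauto _ _ (fun h => hjj (Fin.castSucc_injective _ h)))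
    have hp : ∀ y : Fin k → G, ∃ u, u ∈ H ∧ p u = y := by
      intro y
      have hy : y ∈ Subgroup.map p H := hpH ▸ Subgroup.mem_top y
      obtain ⟨u, hu, hu2⟩ := hy
      exact ⟨u, hu, hu2⟩
    -- last coordinate is surjective from H
    have hq : ∀ x : G, ∃ u, u ∈ H ∧ u (Fin.last k) = x := by
      intro x
      have h1 : Subgroup.map (Pi.evalMonoidHom (fun _ : Fin (k+1) => G) (Fin.last k)) H = ⊤ := by
        rw [hHdef, MonoidHom.map_closure]
        have h2 : (Pi.evalMonoidHom (fun _ : Fin (k+1) => G) (Fin.last k)) '' Set.range a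
            = Set.range fun i : Fin n => a i (Fin.last k) := by
          rw [← Set.range_comp]; rfl
        rw [h2]
        exact hcol _
      have hx : x ∈ Subgroup.map (Pi.evalMonoidHom (fun _ : Fin (k+1) => G) (Fin.last k)) H :=
        h1 ▸ Subgroup.mem_top x
      obtain ⟨u, hu, hu2⟩ := hx
      exact ⟨u, hu, hu2⟩
    set e : G →* (Fin (k+1) → G) := MonoidHom.mulSingle (fun _ => G) (Fin.last k) with hedef
    have hsplit : ∀ w : Fin (k+1) → G, p w = 1 → w = e (w (Fin.last k)) := by
      intro w hw
      funext m
      induction m using Fin.lastCases with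
      | last => simp [hedef, MonoidHom.mulSingle_apply, Pi.mulSingle_eq_same]
      | cast j =>
        have h1 : w j.castSucc = 1 := congrFun hw j
        have h2 : e (w (Fin.last k)) j.castSucc = 1 := by
          simp [hedef, MonoidHom.mulSingle_apply,
            Pi.mulSingle_eq_of_ne (Fin.castSucc_lt_last j).ne]
        rw [h1, h2]
    set N : Subgroup G := H.comap e with hNdef
    have hN : N.Normal := by
      constructor
      intro x hx g
      obtain ⟨u, hu, hul⟩ := hq g
      have h2 : u * e x * u⁻¹ ∈ H := mul_mem (mul_mem hu hx) (inv_mem hu)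
      have h3 : u * e x * u⁻¹ = e (g * x * g⁻¹) := by
        funext m
        induction m using Fin.lastCases with
        | last =>
          simp [hedef, MonoidHom.mulSingle_apply, Pi.mulSingle_eq_same, hul]
        | cast j =>
          have hne := (Fin.castSucc_lt_last j).ne
          simp [hedef, MonoidHom.mulSingle_apply, Pi.mulSingle_eq_of_ne hne]
      rw [Subgroup.mem_comap, ← h3]
      exact h2
    rcases IsSimpleGroup.eq_bot_or_eq_top_of_normal N hN with hNbot | hNtop
    · -- N = ⊥ : H is the graph of a homomorphism; derive a forbidden automorphism
      exfalso
      set φ0 : (Fin k → G) → G := fun y => (Classical.choose (hp y)) (Fin.last k) with hφ0def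
      have hwd : ∀ u, u ∈ H → φ0 (p u) = u (Fin.last k) := by
        intro u hu
        obtain ⟨hu', hpu'⟩ := Classical.choose_spec (hp (p u))
        set u' := Classical.choose (hp (p u)) with hu'def
        have h1 : p (u' * u⁻¹) = 1 := by rw [map_mul, map_inv, hpu']; simp
        have h2 : u' * u⁻¹ = e ((u' * u⁻¹) (Fin.last k)) := hsplit _ h1
        have h3 : (u' * u⁻¹) (Fin.last k) ∈ N := by
          rw [hNdef, Subgroup.mem_comap, ← h2]
          exact mul_mem hu' (inv_mem hu)
        rw [hNbot, Subgroup.mem_bot] at h3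
        have h4 : u' (Fin.last k) * (u (Fin.last k))⁻¹ = 1 := h3
        have h5 : u' (Fin.last k) = u (Fin.last k) := by
          rw [mul_inv_eq_one] at h4; exact h4
        exact h5
      have hmul : ∀ y z, φ0 (y * z) = φ0 y * φ0 z := by
        intro y z
        obtain ⟨u, hu, hpu⟩ := hp y
        obtain ⟨v, hv, hpv⟩ := hp z
        have h1 : p (u * v) = y * z := by rw [map_mul, hpu, hpv]
        have h2 := hwd (u * v) (mul_mem hu hv)
        rw [h1] at h2
        have h3 := hwd u hu; rw [hpu] at h3
        have h4 := hwd v hv; rw [hpv] at h4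
        rw [h2, h3, h4]
        rfl
      set φ : (Fin k → G) →* G := MonoidHom.mk' φ0 hmul with hφdef
      have hφeq : ∀ y, φ y = φ0 y := fun _ => rfl
      have hφsurj : Function.Surjective φ := by
        intro x
        obtain ⟨u, hu, hul⟩ := hq x
        exact ⟨p u, by rw [hφeq, hwd u hu, hul]⟩
      have hφa : ∀ i, φ (a' i) = a i (Fin.last k) := by
        intro i
        have h1 : p (a i) = a' i := rfl
        rw [hφeq, ← h1, hwd (a i) (hmem i)]
      -- trichotomy for each coordinate
      have htri : ∀ j : Fin k,
          Function.Injective (φ.comp (MonoidHom.mulSingle (fun _ : Fin k => G) j)) ∨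
          (∀ x : G, φ (Pi.mulSingle j x) = 1) := by
        intro j
        rcases IsSimpleGroup.eq_bot_or_eq_top_of_normal
            (φ.comp (MonoidHom.mulSingle (fun _ : Fin k => G) j)).ker
            (MonoidHom.normal_ker _) with hb | ht
        · left; exact (MonoidHom.ker_eq_bot_iff _).mp hb
        · right
          intro x
          have hx : x ∈ (φ.comp (MonoidHom.mulSingle (fun _ : Fin k => G) j)).ker := by
            rw [ht]; trivial
          exact hx
      -- at least one coordinate has injective composite
      have hex : ∃ j0 : Fin k, Function.Injective
          (φ.comp (MonoidHom.mulSingle (fun _ : Fin k => G) j0)) := by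
        by_contra hno
        push_neg at hno
        have hall : ∀ j (x : G), φ (Pi.mulSingle j x) = 1 := by
          intro j
          rcases htri j with h | h
          · exact absurd h (hno j)
          · exact h
        have htriv : ∀ y, φ y = 1 := by
          have hphi1 : φ = 1 := MonoidHom.pi_ext fun j x => by
            rw [hall j x]; rfl
          intro y; rw [hphi1]; rfl
        obtain ⟨x, hx1⟩ := exists_ne (1 : G)
        obtain ⟨y, hy⟩ := hφsurj x
        exact hx1 (by rw [← hy, htriv])
      obtain ⟨j0, hj0⟩ := hex
      -- every other coordinate has trivial composite
      have hother : ∀ j : Fin k, j ≠ j0 → ∀ x : G, φ (Pi.mulSingle j x) = 1 := by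
        intro j hj
        rcases htri j with hinj | h
        · exfalso
          have hs1 : Function.Surjective
              (φ.comp (MonoidHom.mulSingle (fun _ : Fin k => G) j)) :=
            Finite.injective_iff_surjective.mp hinj
          have hs0 : Function.Surjective
              (φ.comp (MonoidHom.mulSingle (fun _ : Fin k => G) j0)) :=
            Finite.injective_iff_surjective.mp hj0
          obtain ⟨x, y, hxy⟩ := hna
          obtain ⟨u, hu⟩ := hs1 x
          obtain ⟨v, hv⟩ := hs0 y
          apply hxy
          have hcomm : Pi.mulSingle (M := fun _ : Fin k => G) j u * Pi.mulSingle j0 v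
              = Pi.mulSingle j0 v * Pi.mulSingle j u := by
            funext m
            by_cases hm : m = j
            · subst hm
              simp [Pi.mulSingle_eq_same, Pi.mulSingle_eq_of_ne hj]
            · by_cases hm0 : m = j0
              · subst hm0
                simp [Pi.mulSingle_eq_same, Pi.mulSingle_eq_of_ne hm]
              · simp [Pi.mulSingle_eq_of_ne hm, Pi.mulSingle_eq_of_ne hm0]
          have := congrArg φ hcomm
          rw [map_mul, map_mul] at this
          rw [← hu, ← hv]
          simpa using this
        · exact h
      -- φ factors through coordinate j0
      have hfact : ∀ y : Fin k → G, φ y = φ (Pi.mulSingle j0 (y j0)) := by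
        have hphieq : φ = (φ.comp (MonoidHom.mulSingle (fun _ : Fin k => G) j0)).comp
            (Pi.evalMonoidHom (fun _ : Fin k => G) j0) := by
          apply MonoidHom.pi_ext
          intro j x
          by_cases hj : j = j0
          · subst hj
            simp [MonoidHom.comp_apply, Pi.evalMonoidHom, MonoidHom.mulSingle_apply,
              Pi.mulSingle_eq_same]
          · have h1 : φ (Pi.mulSingle j x) = 1 := hother j hj x
            have h2 : (Pi.mulSingle (M := fun _ : Fin k => G) j x) j0 = 1 := by
              simp [Pi.mulSingle_eq_of_ne (Ne.symm hj)]
            rw [h1]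
            show (1 : G) = φ (Pi.mulSingle j0 ((Pi.mulSingle (M := fun _ : Fin k => G) j x) j0))
            rw [h2]
            simp
        intro y
        conv_lhs => rw [hphieq]
        rfl
      set f := φ.comp (MonoidHom.mulSingle (fun _ : Fin k => G) j0) with hfdef
      have hfsurj : Function.Surjective f := by
        intro x
        obtain ⟨y, hy⟩ := hφsurj x
        exact ⟨y j0, by rw [hfdef, MonoidHom.comp_apply, MonoidHom.mulSingle_apply,
          ← hfact y, hy]⟩
      set F := MulEquiv.ofBijective f ⟨hj0, hfsurj⟩ with hFdef
      apply hauto (Fin.castSucc j0) (Fin.last k) (Fin.castSucc_lt_last j0).ne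
      refine ⟨F, fun i => ?_⟩
      have h1 : F (a i (Fin.castSucc j0)) = f (a' i j0) := rfl
      rw [h1]
      have h2 : f (a' i j0) = φ (Pi.mulSingle j0 (a' i j0)) := rfl
      rw [h2, ← hfact (a' i), hφa i]
    · -- N = ⊤ : H contains the last factor, hence everything
      rw [Subgroup.eq_top_iff']
      intro g
      obtain ⟨u, hu, hpu⟩ := hp (p g)
      have h1 : p (u⁻¹ * g) = 1 := by rw [map_mul, map_inv, hpu]; simp
      have h2 : u⁻¹ * g = e ((u⁻¹ * g) (Fin.last k)) := hsplit _ h1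
      have h3 : e ((u⁻¹ * g) (Fin.last k)) ∈ H := by
        have hm : ((u⁻¹ * g) (Fin.last k)) ∈ N := by rw [hNtop]; trivial
        exact hm
      have h4 : g = u * (u⁻¹ * g) := by group
      rw [h4]
      exact mul_mem hu (h2 ▸ h3)

end Aux

/-- Hall's criterion: if `G` is a finite non-abelian simple group generated by `n`
elements, then `n` tuples `(a i : Fin k → G)` generate `G^k` if and only if each
column generates `G` and no automorphism of `G` maps one column to another. -/
theorem hall_criterion (G : Type*) [Group G] [Finite G] [IsSimpleGroup G]
    (hnonabelian : ∃ x y : G, x * y ≠ y * x)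
    (n k : ℕ)
    (hgen : ∃ S : Finset G, S.card = n ∧ Subgroup.closure (S : Set G) = ⊤)
    (a : Fin n → Fin k → G) :
    Subgroup.closure (Set.range a) = ⊤ ↔
      ((∀ j : Fin k, Subgroup.closure (Set.range fun i : Fin n => a i j) = ⊤) ∧
        ∀ j j' : Fin k, j ≠ j' →
          ¬∃ f : G ≃* G, ∀ i : Fin n, f (a i j) = a i j') := by
  constructor
  · intro hH
    exact ⟨fun j => hall_column n k a hH j,
      fun j j' hjj => hall_noauto n k a hnonabelian hH hjj⟩
  · rintro ⟨hcol, hauto⟩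
    exact hall_aux hnonabelian k n a hcol hauto
end

section
/- Let k be a positive integer and let (s_1, ..., s_k) and (t_1, ..., t_k) be elements of A_5^k. The pair {(s_1, ..., s_k), (t_1, ..., t_k)} generates A_5^k if and only if both of the following hold: (1) for each i = 1, ..., k, the set {s_i, t_i} generates A_5; and (2) there is no automorphism f of A_5 with f(s_i) = s_j and f(t_i) = t_j for any pair of distinct indices i ≠ j. -/
set_option linter.unusedVariables false

open Subgroup

variable {G : Type*} [Group G]

/-- Goursat-type lemma for two factors of a simple group. -/
lemma hallA5_pair_full_or_graph [IsSimpleGroup G] (K : Subgroup (G × G))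
    (h1 : ∀ a : G, ∃ x ∈ K, Prod.fst x = a)
    (h2 : ∀ b : G, ∃ x ∈ K, Prod.snd x = b) :
    K = ⊤ ∨ ∃ f : G ≃* G, ∀ x ∈ K, f x.1 = x.2 := by
  set L₁ : Subgroup G := K.comap (MonoidHom.inl G G) with hL₁
  set L₂ : Subgroup G := K.comap (MonoidHom.inr G G) with hL₂
  have memL₁ : ∀ a : G, a ∈ L₁ ↔ ((a, 1) : G × G) ∈ K := fun a => Iff.rfl
  have memL₂ : ∀ b : G, b ∈ L₂ ↔ ((1, b) : G × G) ∈ K := fun b => Iff.rfl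
  have hN₁ : L₁.Normal := by
    constructor
    intro a ha g
    obtain ⟨x, hx, hx1⟩ := h1 g
    have : x * (a, 1) * x⁻¹ ∈ K := mul_mem (mul_mem hx ((memL₁ a).mp ha)) (inv_mem hx)
    have he : x * (a, 1) * x⁻¹ = ((g * a * g⁻¹, 1) : G × G) := by
      ext <;> simp [hx1]
    rw [he] at this
    exact (memL₁ _).mpr this
  have hN₂ : L₂.Normal := by
    constructor
    intro b hb g
    obtain ⟨x, hx, hx2⟩ := h2 g
    have : x * (1, b) * x⁻¹ ∈ K := mul_mem (mul_mem hx ((memL₂ b).mp hb)) (inv_mem hx)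
    have he : x * (1, b) * x⁻¹ = ((1, g * b * g⁻¹) : G × G) := by
      ext <;> simp [hx2]
    rw [he] at this
    exact (memL₂ _).mpr this
  rcases IsSimpleGroup.eq_bot_or_eq_top_of_normal L₁ hN₁ with hL1 | hL1
  · rcases IsSimpleGroup.eq_bot_or_eq_top_of_normal L₂ hN₂ with hL2 | hL2
    · -- both trivial: build the isomorphism
      right
      have key2 : ∀ x y : G × G, x ∈ K → y ∈ K → x.1 = y.1 → x.2 = y.2 := by
        intro x y hx hy hxy
        have hm : x⁻¹ * y ∈ K := mul_mem (inv_mem hx) hy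
        have h1' : (x⁻¹ * y).1 = 1 := by simp [hxy]
        have : ((1 : G), (x⁻¹ * y).2) ∈ K := by
          have : x⁻¹ * y = ((1 : G), (x⁻¹ * y).2) := Prod.ext h1' rfl
          rwa [this] at hm
        have : (x⁻¹ * y).2 ∈ L₂ := (memL₂ _).mpr this
        rw [hL2, Subgroup.mem_bot] at this
        have : x.2⁻¹ * y.2 = 1 := this
        exact (inv_mul_eq_one.mp this)
      have key1 : ∀ x y : G × G, x ∈ K → y ∈ K → x.2 = y.2 → x.1 = y.1 := by
        intro x y hx hy hxy
        have hm : x⁻¹ * y ∈ K := mul_mem (inv_mem hx) hy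
        have h2' : (x⁻¹ * y).2 = 1 := by simp [hxy]
        have : ((x⁻¹ * y).1, (1 : G)) ∈ K := by
          have : x⁻¹ * y = ((x⁻¹ * y).1, (1 : G)) := Prod.ext rfl h2'
          rwa [this] at hm
        have : (x⁻¹ * y).1 ∈ L₁ := (memL₁ _).mpr this
        rw [hL1, Subgroup.mem_bot] at this
        exact inv_mul_eq_one.mp this
      choose F hFK hF1 using h1
      choose B hBK hB2 using h2
      have hmul : ∀ a b : G, (F (a * b)).2 = (F a).2 * (F b).2 := by
        intro a b
        exact key2 _ _ (hFK (a * b)) (mul_mem (hFK a) (hFK b))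
          (by simp [hF1])
      have hleft : ∀ a : G, (B ((F a).2)).1 = a := by
        intro a
        have := key1 _ _ (hBK ((F a).2)) (hFK a) (by rw [hB2])
        rwa [hF1] at this
      have hright : ∀ b : G, (F ((B b).1)).2 = b := by
        intro b
        have := key2 _ _ (hFK ((B b).1)) (hBK b) (by rw [hF1])
        rwa [hB2] at this
      refine ⟨MulEquiv.mk' ⟨fun a => (F a).2, fun b => (B b).1, hleft, hright⟩ hmul, ?_⟩
      intro x hx
      exact key2 _ _ (hFK x.1) hx (hF1 x.1)
    · -- L₂ = ⊤ : K = ⊤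
      left
      rw [eq_top_iff']
      rintro ⟨a, b⟩
      obtain ⟨x, hx, hx1⟩ := h1 a
      have hmem : ((1 : G), x.2⁻¹ * b) ∈ K := (memL₂ _).mp (by rw [hL2]; trivial)
      have : x * ((1 : G), x.2⁻¹ * b) ∈ K := mul_mem hx hmem
      have he : x * ((1 : G), x.2⁻¹ * b) = (a, b) := by
        ext <;> simp [hx1]
      rwa [he] at this
  · -- L₁ = ⊤ : K = ⊤
    left
    rw [eq_top_iff']
    rintro ⟨a, b⟩
    obtain ⟨x, hx, hx2⟩ := h2 b
    have hmem : ((a * x.1⁻¹, 1) : G × G) ∈ K := (memL₁ _).mp (by rw [hL1]; trivial)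
    have : ((a * x.1⁻¹, 1) : G × G) * x ∈ K := mul_mem hmem hx
    have he : ((a * x.1⁻¹, 1) : G × G) * x = (a, b) := by
      ext <;> simp [hx2]
    rwa [he] at this
lemma hallA5_list_prod_eq {ι : Type*} {M : Type*} [Monoid M] :
    ∀ (l : List ι), l.Nodup → ∀ (f : ι → M) (j : ι), j ∈ l →
      (∀ i ∈ l, i ≠ j → f i = 1) → (l.map f).prod = f j := by
  intro l
  induction l with
  | nil => intro _ _ j hj; exact absurd hj List.not_mem_nil
  | cons a l ih =>
    intro hnd f j hj hone
    rw [List.nodup_cons] at hnd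
    rcases List.mem_cons.mp hj with rfl | hj'
    · have : ∀ x ∈ l.map f, x = 1 := by
        rintro x hx
        obtain ⟨i, hi, rfl⟩ := List.mem_map.mp hx
        exact hone i (List.mem_cons_of_mem _ hi) (fun e => hnd.1 (e ▸ hi))
      simp [List.prod_eq_one this]
    · have ha : f a = 1 := hone a List.mem_cons_self (fun e => hnd.1 (e ▸ hj'))
      have := ih hnd.2 f j hj' (fun i hi hij => hone i (List.mem_cons_of_mem _ hi) hij)
      simp [ha, this]
lemma hallA5_pi_mem (hZ : Subgroup.center G = ⊥) [IsSimpleGroup G] :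
    ∀ (n : ℕ) (ι : Type) [Fintype ι] [DecidableEq ι], Fintype.card ι ≤ n →
      ∀ (H : Subgroup (ι → G)),
        (∀ (i : ι) (a : G), ∃ h ∈ H, h i = a) →
        (∀ i j : ι, i ≠ j → ∀ a b : G, ∃ h ∈ H, h i = a ∧ h j = b) →
        ∀ x : ι → G, x ∈ H := by
  intro n
  induction n with
  | zero =>
    intro ι _ _ hcard H h1 h2 x
    have : IsEmpty ι := Fintype.card_eq_zero_iff.mp (Nat.le_zero.mp hcard)
    have hx : x = 1 := funext fun i => isEmptyElim i
    rw [hx]; exact one_mem H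
  | succ n ih =>
    intro ι _ _ hcard H h1 h2 x
    by_cases hne : Nonempty ι
    swap
    · have : IsEmpty ι := not_nonempty_iff.mp hne
      have hx : x = 1 := funext fun i => isEmptyElim i
      rw [hx]; exact one_mem H
    obtain ⟨i₀⟩ := hne
    -- the restriction homomorphism
    set ι' := {j : ι // j ≠ i₀} with hι'
    set π : (ι → G) →* (ι' → G) :=
      Pi.monoidHom (fun j => Pi.evalMonoidHom (fun _ : ι => G) j.1) with hπdef
    have hπ : ∀ (h : ι → G) (j : ι'), π h j = h j.1 := fun _ _ => rfl
    set H' := H.map π with hH'def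
    have hcard' : Fintype.card ι' ≤ n := by
      have : Fintype.card ι' < Fintype.card ι :=
        Fintype.card_subtype_lt (x := i₀) (by simp)
      omega
    have h1' : ∀ (j : ι') (a : G), ∃ h ∈ H', h j = a := by
      intro j a
      obtain ⟨h, hh, hha⟩ := h1 j.1 a
      exact ⟨π h, ⟨h, hh, rfl⟩, hha⟩
    have h2' : ∀ j j' : ι', j ≠ j' → ∀ a b : G, ∃ h ∈ H', h j = a ∧ h j' = b := by
      intro j j' hjj a b
      obtain ⟨h, hh, hha, hhb⟩ := h2 j.1 j'.1 (fun e => hjj (Subtype.ext e)) a b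
      exact ⟨π h, ⟨h, hh, rfl⟩, hha, hhb⟩
    have hH' : ∀ y : ι' → G, y ∈ H' := ih ι' hcard' H' h1' h2'
    -- the "first coordinate" subgroup
    set M : Subgroup G := H.comap (MonoidHom.mulSingle (fun _ : ι => G) i₀) with hMdef
    have memM : ∀ c : G, c ∈ M ↔ Pi.mulSingle i₀ c ∈ H := by
      intro c
      rw [hMdef, Subgroup.mem_comap, MonoidHom.mulSingle_apply]
    have hMnormal : M.Normal := by
      constructor
      intro c hc g
      obtain ⟨h, hh, hhg⟩ := h1 i₀ g
      have hmem : h * Pi.mulSingle i₀ c * h⁻¹ ∈ H :=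
        mul_mem (mul_mem hh ((memM c).mp hc)) (inv_mem hh)
      have he : h * Pi.mulSingle i₀ c * h⁻¹ = Pi.mulSingle i₀ (g * c * g⁻¹) := by
        funext j
        by_cases hj : j = i₀
        · subst hj; simp [hhg]
        · simp [Pi.mulSingle_eq_of_ne hj]
      rw [he] at hmem
      exact (memM _).mpr hmem
    rcases IsSimpleGroup.eq_bot_or_eq_top_of_normal M hMnormal with hM | hM
    · -- M = ⊥ : derive a contradiction
      exfalso
      have Ntriv : ∀ h ∈ H, (∀ j : ι, j ≠ i₀ → h j = 1) → h = 1 := by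
        intro h hh hsupp
        have he : h = Pi.mulSingle i₀ (h i₀) := by
          funext j
          by_cases hj : j = i₀
          · subst hj; simp
          · simp [Pi.mulSingle_eq_of_ne hj, hsupp j hj]
        have : h i₀ ∈ M := (memM _).mpr (he ▸ hh)
        rw [hM, Subgroup.mem_bot] at this
        rw [he, this, Pi.mulSingle_one]
      have claimA : ∀ j : ι, j ≠ i₀ → ∀ h' ∈ H,
          (∀ j' : ι, j' ≠ i₀ → j' ≠ j → h' j' = 1) → h' i₀ = 1 := by
        intro j hj h' hh' hsupp
        have hc : h' i₀ ∈ Subgroup.center G := by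
          rw [Subgroup.mem_center_iff]
          intro c
          obtain ⟨h, hh, hhj, hhi⟩ := h2 j i₀ hj 1 c
          have hz : h' * h * h'⁻¹ * h⁻¹ ∈ H :=
            mul_mem (mul_mem (mul_mem hh' hh) (inv_mem hh')) (inv_mem hh)
          have hzsupp : ∀ j'' : ι, j'' ≠ i₀ → (h' * h * h'⁻¹ * h⁻¹) j'' = 1 := by
            intro j'' hj''
            by_cases hjj : j'' = j
            · subst hjj
              simp [Pi.mul_apply, Pi.inv_apply, hhj]
            · simp [Pi.mul_apply, Pi.inv_apply, hsupp j'' hj'' hjj]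
          have hz1 : h' * h * h'⁻¹ * h⁻¹ = 1 := Ntriv _ hz hzsupp
          have := congrFun hz1 i₀
          simp only [Pi.mul_apply, Pi.inv_apply, Pi.one_apply, hhi] at this
          -- this : h' i₀ * c * (h' i₀)⁻¹ * c⁻¹ = 1
          have h3 : h' i₀ * c * (h' i₀)⁻¹ = c := by
            have := mul_eq_one_iff_eq_inv.mp this
            rw [this, inv_inv]
          calc c * h' i₀ = (h' i₀ * c * (h' i₀)⁻¹) * h' i₀ := by rw [h3]
            _ = h' i₀ * c := by group
        rw [hZ, Subgroup.mem_bot] at hc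
        exact hc
      obtain ⟨c, hc1⟩ := exists_ne (1 : G)
      obtain ⟨h, hh, hhi⟩ := h1 i₀ c
      have hg : ∀ j : ι, ∃ g ∈ H, g i₀ = 1 ∧
          ∀ j' : ι, j' ≠ i₀ → g j' = if j' = j then h j else 1 := by
        intro j
        by_cases hj : j = i₀
        · refine ⟨1, one_mem H, rfl, ?_⟩
          intro j' hj'
          rw [if_neg (fun e => hj' (e.trans hj))]; rfl
        · obtain ⟨g, hgH, hgπ⟩ := hH' (Pi.mulSingle (⟨j, hj⟩ : ι') (h j))
          have hval : ∀ j' : ι, j' ≠ i₀ → g j' = if j' = j then h j else 1 := by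
            intro j' hj'
            have heq : g j' = Pi.mulSingle (M := fun _ : ι' => G) ⟨j, hj⟩ (h j) ⟨j', hj'⟩ := by
              have := congrFun hgπ ⟨j', hj'⟩
              rw [hπ] at this
              exact this
            by_cases hjj : j' = j
            · rw [if_pos hjj, heq]
              have he2 : (⟨j', hj'⟩ : ι') = ⟨j, hj⟩ := Subtype.ext hjj
              rw [he2, Pi.mulSingle_eq_same]
            · rw [if_neg hjj, heq,
                Pi.mulSingle_eq_of_ne (fun e => hjj (congrArg Subtype.val e))]
          refine ⟨g, hgH, ?_, hval⟩
          exact claimA j hj g hgH (fun j' h1' h2' => by rw [hval j' h1', if_neg h2'])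
      choose g hgH hgi₀ hgval using hg
      set l := (Finset.univ.erase i₀).toList with hl
      have hlnd : l.Nodup := Finset.nodup_toList _
      have hmeml : ∀ j : ι, j ∈ l ↔ j ≠ i₀ := by
        intro j
        rw [hl, Finset.mem_toList, Finset.mem_erase]
        simp
      set P := (l.map g).prod with hP
      have hPH : P ∈ H := list_prod_mem (by
        rintro y hy
        obtain ⟨j, _, rfl⟩ := List.mem_map.mp hy
        exact hgH j)
      have hPapply : ∀ j : ι, P j = ((l.map g).map (fun f => f j)).prod := by
        intro j
        rw [hP, Pi.list_prod_apply]
      have hPi₀ : P i₀ = 1 := by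
        rw [hPapply, List.map_map]
        apply List.prod_eq_one
        rintro y hy
        obtain ⟨j, _, rfl⟩ := List.mem_map.mp hy
        exact hgi₀ j
      have hPj : ∀ j : ι, j ≠ i₀ → P j = h j := by
        intro j hj
        rw [hPapply, List.map_map]
        have := hallA5_list_prod_eq l hlnd ((fun f : ι → G => f j) ∘ g) j ((hmeml j).mpr hj)
          (fun i hi hij => by
            show g i j = 1
            rw [hgval i j hj, if_neg (fun e => hij e.symm)])
        rw [this]
        show g j j = h j
        rw [hgval j j hj, if_pos rfl]
      have hq : h * P⁻¹ ∈ H := mul_mem hh (inv_mem hPH)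
      have hq1 : h * P⁻¹ = 1 := by
        apply Ntriv _ hq
        intro j hj
        simp [Pi.mul_apply, Pi.inv_apply, hPj j hj]
      have : h = P := by
        have := mul_inv_eq_one.mp hq1
        exact this
      rw [this, hPi₀] at hhi
      exact hc1 hhi.symm
    · -- M = ⊤ : conclude
      obtain ⟨h, hh, hph⟩ := hH' (π x)
      have hsupp : ∀ j : ι, j ≠ i₀ → (x * h⁻¹) j = 1 := by
        intro j hj
        have heq : h j = x j := by
          have := congrFun hph ⟨j, hj⟩
          rw [hπ] at this
          exact this
        simp [Pi.mul_apply, Pi.inv_apply, heq]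
      have he : x * h⁻¹ = Pi.mulSingle i₀ ((x * h⁻¹) i₀) := by
        funext j
        by_cases hj : j = i₀
        · subst hj; simp
        · simp [Pi.mulSingle_eq_of_ne hj, hsupp j hj]
      have hmem : x * h⁻¹ ∈ H := by
        rw [he]
        exact (memM _).mp (by rw [hM]; trivial)
      have : (x * h⁻¹) * h ∈ H := mul_mem hmem hh
      simpa using this
lemma hallA5_center_eq_bot : Subgroup.center ↥(alternatingGroup (Fin 5)) = ⊥ := by
  rcases IsSimpleGroup.eq_bot_or_eq_top_of_normal
      (Subgroup.center ↥(alternatingGroup (Fin 5))) inferInstance with h | h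
  · exact h
  · exfalso
    set a : ↥(alternatingGroup (Fin 5)) :=
      ⟨Equiv.swap 0 1 * Equiv.swap 1 2, by rw [Equiv.Perm.mem_alternatingGroup]; decide⟩ with ha
    set b : ↥(alternatingGroup (Fin 5)) :=
      ⟨Equiv.swap 1 2 * Equiv.swap 2 3, by rw [Equiv.Perm.mem_alternatingGroup]; decide⟩ with hb
    have hcomm : b * a = a * b :=
      Subgroup.mem_center_iff.mp (h ▸ Subgroup.mem_top a) b
    have : (b : Equiv.Perm (Fin 5)) * a = a * b := congrArg Subtype.val hcomm
    revert this
    decide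
/-- Hall's criterion for `A₅^k`: the pair of tuples `(s₁, …, s_k)`, `(t₁, …, t_k)`
generates `A₅^k` if and only if each pair `{sᵢ, tᵢ}` generates `A₅` and no
automorphism of `A₅` maps `(sᵢ, tᵢ)` to `(sⱼ, tⱼ)` for `i ≠ j`. -/
theorem hall_criterion_A5 (k : ℕ) (hk : 1 ≤ k)
    (s t : Fin k → ↥(alternatingGroup (Fin 5))) :
    Subgroup.closure {s, t} = ⊤ ↔
      ((∀ i : Fin k, Subgroup.closure {s i, t i} = ⊤) ∧
        ∀ i j : Fin k, i ≠ j →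
          ¬∃ f : ↥(alternatingGroup (Fin 5)) ≃* ↥(alternatingGroup (Fin 5)),
            f (s i) = s j ∧ f (t i) = t j) := by
  constructor
  · intro hgen
    constructor
    · intro i
      have hm : (Subgroup.closure {s, t}).map (Pi.evalMonoidHom (fun _ : Fin k => ↥(alternatingGroup (Fin 5))) i) =
          Subgroup.closure ((Pi.evalMonoidHom (fun _ : Fin k => ↥(alternatingGroup (Fin 5))) i) '' {s, t}) :=
        MonoidHom.map_closure _ _
      rw [hgen, Subgroup.map_top_of_surjective _ (fun a => ⟨fun _ => a, rfl⟩),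
        Set.image_pair] at hm
      exact hm.symm
    · rintro i j hij ⟨f, hfs, hft⟩
      set K : Subgroup (Fin k → ↥(alternatingGroup (Fin 5))) :=
        MonoidHom.eqLocus
          ((f : ↥(alternatingGroup (Fin 5)) →* ↥(alternatingGroup (Fin 5))).comp (Pi.evalMonoidHom (fun _ : Fin k => ↥(alternatingGroup (Fin 5))) i))
          (Pi.evalMonoidHom (fun _ : Fin k => ↥(alternatingGroup (Fin 5))) j) with hK
      have hsK : s ∈ K := hfs
      have htK : t ∈ K := hft
      have hle : Subgroup.closure {s, t} ≤ K := by
        rw [Subgroup.closure_le]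
        rintro x hx
        rcases hx with rfl | hx
        · exact hsK
        · rw [Set.mem_singleton_iff] at hx; subst hx; exact htK
      rw [hgen] at hle
      obtain ⟨c, hc⟩ := exists_ne (1 : ↥(alternatingGroup (Fin 5)))
      set x : Fin k → ↥(alternatingGroup (Fin 5)) := Pi.mulSingle j c with hx
      have hmem : x ∈ K := hle (Subgroup.mem_top _)
      have hfx : f (x i) = x j := hmem
      rw [hx, Pi.mulSingle_eq_same, Pi.mulSingle_eq_of_ne hij, map_one] at hfx
      exact hc hfx.symm
  · rintro ⟨hcoord, hauto⟩
    set H := Subgroup.closure ({s, t} : Set (Fin k → ↥(alternatingGroup (Fin 5)))) with hH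
    have hsH : s ∈ H := Subgroup.subset_closure (Set.mem_insert _ _)
    have htH : t ∈ H := Subgroup.subset_closure (Set.mem_insert_of_mem _ rfl)
    have h1 : ∀ (i : Fin k) (a : ↥(alternatingGroup (Fin 5))), ∃ h ∈ H, h i = a := by
      intro i a
      have hm : H.map (Pi.evalMonoidHom (fun _ : Fin k => ↥(alternatingGroup (Fin 5))) i) = ⊤ := by
        rw [hH, MonoidHom.map_closure, Set.image_pair]
        exact hcoord i
      have : a ∈ H.map (Pi.evalMonoidHom (fun _ : Fin k => ↥(alternatingGroup (Fin 5))) i) := by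
        rw [hm]; trivial
      obtain ⟨h, hh, hha⟩ := this
      exact ⟨h, hh, hha⟩
    have h2 : ∀ i j : Fin k, i ≠ j → ∀ a b : ↥(alternatingGroup (Fin 5)), ∃ h ∈ H, h i = a ∧ h j = b := by
      intro i j hij a b
      set p : (Fin k → ↥(alternatingGroup (Fin 5))) →* ↥(alternatingGroup (Fin 5)) × ↥(alternatingGroup (Fin 5)) :=
        (Pi.evalMonoidHom (fun _ : Fin k => ↥(alternatingGroup (Fin 5))) i).prod
          (Pi.evalMonoidHom (fun _ : Fin k => ↥(alternatingGroup (Fin 5))) j) with hp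
      set K := H.map p with hKdef
      have hK1 : ∀ a : ↥(alternatingGroup (Fin 5)), ∃ x ∈ K, Prod.fst x = a := by
        intro a
        obtain ⟨h, hh, hha⟩ := h1 i a
        exact ⟨p h, ⟨h, hh, rfl⟩, hha⟩
      have hK2 : ∀ b : ↥(alternatingGroup (Fin 5)), ∃ x ∈ K, Prod.snd x = b := by
        intro b
        obtain ⟨h, hh, hhb⟩ := h1 j b
        exact ⟨p h, ⟨h, hh, rfl⟩, hhb⟩
      rcases hallA5_pair_full_or_graph K hK1 hK2 with hKtop | ⟨f, hf⟩
      · have : ((a, b) : ↥(alternatingGroup (Fin 5)) × ↥(alternatingGroup (Fin 5))) ∈ K := by rw [hKtop]; trivial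
        obtain ⟨h, hh, hph⟩ := this
        exact ⟨h, hh, congrArg Prod.fst hph, congrArg Prod.snd hph⟩
      · exfalso
        refine hauto i j hij ⟨f, ?_, ?_⟩
        · exact hf (p s) ⟨s, hsH, rfl⟩
        · exact hf (p t) ⟨t, htH, rfl⟩
    rw [Subgroup.eq_top_iff']
    exact hallA5_pi_mem hallA5_center_eq_bot (Fintype.card (Fin k)) (Fin k) le_rfl H h1 h2
end

section
/- For every odd integer n ≥ 5, with a = (1 2 3 ⋯ n) and b = (1 2)(3 4), the diameter of A_n^2 with respect to the generating set G = {(a, b), (b, a)} satisfies diam(A_n^2, G) ≤ 2n · diam(A_n, {b, a²}). -/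
/-- The diameter of the subgroup `H` with respect to the set `A`: the supremum over
`g ∈ H` of the length of `g` over `A`. -/
noncomputable def diamSubgroup {G : Type*} [Group G] (H : Subgroup G) (A : Set G) : ℕ :=
  ⨆ g : H, wordLength A (g : G)

private lemma myWordLength_le {G : Type*} [Group G] (A : Set G) (g : G) (m : ℕ)
    (h : ∃ l : List G, l.length ≤ m ∧ (∀ x ∈ l, x ∈ A) ∧ l.prod = g) :
    wordLength A g ≤ m := by
  obtain ⟨l, hlen, hmem, hprod⟩ := h
  exact le_trans (Nat.sInf_le ⟨l, rfl, hmem, hprod⟩) hlen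

private lemma myWordLength_spec {G : Type*} [Group G] (A : Set G) (g : G)
    (h : ∃ l : List G, (∀ x ∈ l, x ∈ A) ∧ l.prod = g) :
    ∃ l : List G, l.length = wordLength A g ∧ (∀ x ∈ l, x ∈ A) ∧ l.prod = g := by
  have hne : {k : ℕ | ∃ l : List G, l.length = k ∧ (∀ x ∈ l, x ∈ A) ∧ l.prod = g}.Nonempty := by
    obtain ⟨l, hm, hp⟩ := h
    exact ⟨l.length, l, rfl, hm, hp⟩
  exact Nat.sInf_mem hne

private lemma myTranslate {G H : Type*} [Monoid G] [Monoid H] (φ : G →* H)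
    (A : Set G) (B : Set H) (t : G → List H) (c : ℕ)
    (ht : ∀ x ∈ A, (t x).prod = φ x ∧ (t x).length ≤ c ∧ ∀ y ∈ t x, y ∈ B) :
    ∀ l : List G, (∀ x ∈ l, x ∈ A) →
      ∃ m : List H, m.prod = φ l.prod ∧ m.length ≤ c * l.length ∧ ∀ y ∈ m, y ∈ B := by
  intro l
  induction l with
  | nil => exact fun _ => ⟨[], by simp, by simp, by simp⟩
  | cons x l ih =>
    intro hmem
    obtain ⟨m, hp, hlen, hB⟩ := ih fun y hy => hmem y (List.mem_cons_of_mem _ hy)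
    obtain ⟨hp', hlen', hB'⟩ := ht x (hmem x List.mem_cons_self)
    refine ⟨t x ++ m, ?_, ?_, ?_⟩
    · rw [List.prod_append, hp, hp', List.prod_cons, map_mul]
    · rw [List.length_append, List.length_cons, Nat.mul_succ]
      omega
    · intro y hy
      rcases List.mem_append.1 hy with h | h
      exacts [hB' y h, hB y h]

private lemma myPowOdd {G : Type*} [Group G] {x : G} (hx : x * x = 1)
    {m : ℕ} (hm : Odd m) : x ^ m = x := by
  obtain ⟨k, rfl⟩ := hm
  rw [pow_succ, pow_mul, pow_two, hx, one_pow, one_mul]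

private lemma mySqPow {G : Type*} [Group G] {x : G} {m : ℕ}
    (hm : Odd m) (hx : x ^ m = 1) : (x ^ 2) ^ ((m + 1) / 2) = x := by
  have h2 : 2 * ((m + 1) / 2) = m + 1 := by
    obtain ⟨k, rfl⟩ := hm
    omega
  rw [← pow_mul, h2, pow_succ, hx, one_mul]

/-- For every odd `n ≥ 5`, with `a = (1 2 ⋯ n)` and `b = (1 2)(3 4)`,
`diam (Aₙ², {(a,b), (b,a)}) ≤ 2 n · diam (Aₙ, {b, a²})`. -/
theorem diam_sq_alternating_odd (n : ℕ) (hn : 5 ≤ n) (hodd : Odd n)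
    (a b : Equiv.Perm (Fin n))
    (ha : a = finRotate n)
    (hb : b = Equiv.swap (⟨0, by omega⟩ : Fin n) ⟨1, by omega⟩ *
          Equiv.swap (⟨2, by omega⟩ : Fin n) ⟨3, by omega⟩) :
    diamSubgroup ((alternatingGroup (Fin n)).prod (alternatingGroup (Fin n)))
        {(a, b), (b, a)} ≤
      2 * n * diamSubgroup (alternatingGroup (Fin n)) {b, a ^ 2} := by
  classical
  set p0 : Fin n := ⟨0, by omega⟩ with hp0
  set p1 : Fin n := ⟨1, by omega⟩ with hp1
  set p2 : Fin n := ⟨2, by omega⟩ with hp2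
  set p3 : Fin n := ⟨3, by omega⟩ with hp3
  -- `b` is an involution
  have hdisj : Equiv.Perm.Disjoint (Equiv.swap p2 p3) (Equiv.swap p0 p1) := by
    intro x
    by_cases h0 : x = p0
    · left
      rw [h0]
      exact Equiv.swap_apply_of_ne_of_ne (by simp [hp0, hp2, Fin.ext_iff])
        (by simp [hp0, hp3, Fin.ext_iff])
    by_cases h1 : x = p1
    · left
      rw [h1]
      exact Equiv.swap_apply_of_ne_of_ne (by simp [hp1, hp2, Fin.ext_iff])
        (by simp [hp1, hp3, Fin.ext_iff])
    · right
      exact Equiv.swap_apply_of_ne_of_ne h0 h1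
  have hb2 : b * b = 1 := by
    rw [hb, hdisj.commute.mul_mul_mul_comm, Equiv.swap_mul_self, Equiv.swap_mul_self, one_mul]
  -- `a` has order `n`
  have han : a ^ n = 1 := by
    have horder : orderOf a = n := by
      rw [ha, Equiv.Perm.IsCycle.orderOf (isCycle_finRotate_of_le (by omega)),
        support_finRotate_of_le (by omega)]
      simp
    have h := pow_orderOf_eq_one a
    rwa [horder] at h
  have hbn : b ^ n = b := myPowOdd hb2 hodd
  have hka : (a ^ 2) ^ ((n + 1) / 2) = a := mySqPow hodd han
  refine ciSup_le ?_
  rintro ⟨⟨g, h⟩, hgh⟩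
  rw [Subgroup.mem_prod] at hgh
  obtain ⟨hg, hh⟩ := hgh
  show wordLength ({(a, b), (b, a)} : Set (Equiv.Perm (Fin n) × Equiv.Perm (Fin n))) (g, h) ≤
      2 * n * diamSubgroup (alternatingGroup (Fin n)) {b, a ^ 2}
  by_cases hex : ∃ l : List (Equiv.Perm (Fin n) × Equiv.Perm (Fin n)),
      (∀ x ∈ l, x ∈ ({(a, b), (b, a)} : Set (Equiv.Perm (Fin n) × Equiv.Perm (Fin n)))) ∧
        l.prod = (g, h)
  · obtain ⟨l, hlA, hlp⟩ := hex
    -- `g` is expressible over `{b, a²}`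
    have hgl : ∃ lg : List (Equiv.Perm (Fin n)),
        (∀ x ∈ lg, x ∈ ({b, a ^ 2} : Set (Equiv.Perm (Fin n)))) ∧ lg.prod = g := by
      obtain ⟨m, hp, -, hB⟩ := myTranslate (MonoidHom.fst _ _) {(a, b), (b, a)} {b, a ^ 2}
        (fun x => if x = (a, b) then List.replicate ((n + 1) / 2) (a ^ 2) else [b]) n
        (by
          intro x hx
          simp only [Set.mem_insert_iff, Set.mem_singleton_iff] at hx
          by_cases hxa : x = (a, b)
          · rw [if_pos hxa, hxa, List.prod_replicate, hka, List.length_replicate]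
            refine ⟨rfl, by omega, fun y hy => ?_⟩
            rw [List.eq_of_mem_replicate hy]
            exact Set.mem_insert_iff.2 (Or.inr rfl)
          · rcases hx with hx | hx
            · exact absurd hx hxa
            · rw [if_neg hxa, hx, List.prod_singleton, List.length_singleton]
              refine ⟨rfl, by omega, fun y hy => ?_⟩
              rw [List.mem_singleton.1 hy]
              exact Set.mem_insert _ _) l hlA
      exact ⟨m, hB, by rw [hp, hlp]; rfl⟩
    -- `h` is expressible over `{b, a²}`
    have hhl : ∃ lh : List (Equiv.Perm (Fin n)),
        (∀ x ∈ lh, x ∈ ({b, a ^ 2} : Set (Equiv.Perm (Fin n)))) ∧ lh.prod = h := by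
      obtain ⟨m, hp, -, hB⟩ := myTranslate (MonoidHom.snd _ _) {(a, b), (b, a)} {b, a ^ 2}
        (fun x => if x = (b, a) then List.replicate ((n + 1) / 2) (a ^ 2) else [b]) n
        (by
          intro x hx
          simp only [Set.mem_insert_iff, Set.mem_singleton_iff] at hx
          by_cases hxa : x = (b, a)
          · rw [if_pos hxa, hxa, List.prod_replicate, hka, List.length_replicate]
            refine ⟨rfl, by omega, fun y hy => ?_⟩
            rw [List.eq_of_mem_replicate hy]
            exact Set.mem_insert_iff.2 (Or.inr rfl)
          · rcases hx with hx | hx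
            · rw [if_neg hxa, hx, List.prod_singleton, List.length_singleton]
              refine ⟨rfl, by omega, fun y hy => ?_⟩
              rw [List.mem_singleton.1 hy]
              exact Set.mem_insert _ _
            · exact absurd hx hxa) l hlA
      exact ⟨m, hB, by rw [hp, hlp]; rfl⟩
    obtain ⟨lg, hlglen, hlgS, hlgp⟩ := myWordLength_spec _ g hgl
    obtain ⟨lh, hlhlen, hlhS, hlhp⟩ := myWordLength_spec _ h hhl
    have hbdd : BddAbove (Set.range fun x : alternatingGroup (Fin n) =>
        wordLength ({b, a ^ 2} : Set (Equiv.Perm (Fin n))) (x : Equiv.Perm (Fin n))) :=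
      Set.Finite.bddAbove (Set.finite_range _)
    have hgD : lg.length ≤ diamSubgroup (alternatingGroup (Fin n)) {b, a ^ 2} := by
      rw [hlglen]
      exact le_ciSup hbdd ⟨g, hg⟩
    have hhD : lh.length ≤ diamSubgroup (alternatingGroup (Fin n)) {b, a ^ 2} := by
      rw [hlhlen]
      exact le_ciSup hbdd ⟨h, hh⟩
    -- build the word for `(g, h)`
    obtain ⟨m1, hm1p, hm1len, hm1B⟩ := myTranslate (MonoidHom.inl _ _) {b, a ^ 2}
      ({(a, b), (b, a)} : Set (Equiv.Perm (Fin n) × Equiv.Perm (Fin n)))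
      (fun x => if x = b then List.replicate n (b, a) else [(a, b), (a, b)]) n
      (by
        intro x hx
        simp only [Set.mem_insert_iff, Set.mem_singleton_iff] at hx
        by_cases hxb : x = b
        · rw [if_pos hxb, hxb, List.prod_replicate, Prod.pow_mk, hbn, han,
            List.length_replicate, MonoidHom.inl_apply]
          refine ⟨rfl, le_refl n, fun y hy => ?_⟩
          rw [List.eq_of_mem_replicate hy]
          exact Set.mem_insert_iff.2 (Or.inr rfl)
        · rcases hx with hx | hx
          · exact absurd hx hxb
          · rw [if_neg hxb, hx, List.prod_cons, List.prod_singleton, Prod.mk_mul_mk, hb2,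
              ← pow_two, MonoidHom.inl_apply]
            refine ⟨rfl, by simp; omega, fun y hy => ?_⟩
            rcases List.mem_pair.1 hy with hy | hy <;> rw [hy] <;> exact Set.mem_insert _ _) lg hlgS
    obtain ⟨m2, hm2p, hm2len, hm2B⟩ := myTranslate (MonoidHom.inr _ _) {b, a ^ 2}
      ({(a, b), (b, a)} : Set (Equiv.Perm (Fin n) × Equiv.Perm (Fin n)))
      (fun x => if x = b then List.replicate n (a, b) else [(b, a), (b, a)]) n
      (by
        intro x hx
        simp only [Set.mem_insert_iff, Set.mem_singleton_iff] at hx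
        by_cases hxb : x = b
        · rw [if_pos hxb, hxb, List.prod_replicate, Prod.pow_mk, hbn, han,
            List.length_replicate, MonoidHom.inr_apply]
          refine ⟨rfl, le_refl n, fun y hy => ?_⟩
          rw [List.eq_of_mem_replicate hy]
          exact Set.mem_insert _ _
        · rcases hx with hx | hx
          · exact absurd hx hxb
          · rw [if_neg hxb, hx, List.prod_cons, List.prod_singleton, Prod.mk_mul_mk, hb2,
              ← pow_two, MonoidHom.inr_apply]
            refine ⟨rfl, by simp; omega, fun y hy => ?_⟩
            rcases List.mem_pair.1 hy with hy | hy <;> rw [hy] <;>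
              exact Set.mem_insert_iff.2 (Or.inr rfl)) lh hlhS
    apply myWordLength_le
    refine ⟨m1 ++ m2, ?_, ?_, ?_⟩
    · rw [List.length_append]
      have h1 : m1.length ≤ n * diamSubgroup (alternatingGroup (Fin n)) {b, a ^ 2} :=
        le_trans hm1len (Nat.mul_le_mul_left _ hgD)
      have h2 : m2.length ≤ n * diamSubgroup (alternatingGroup (Fin n)) {b, a ^ 2} :=
        le_trans hm2len (Nat.mul_le_mul_left _ hhD)
      calc m1.length + m2.length
          ≤ n * diamSubgroup (alternatingGroup (Fin n)) {b, a ^ 2} +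
            n * diamSubgroup (alternatingGroup (Fin n)) {b, a ^ 2} := add_le_add h1 h2
        _ = 2 * n * diamSubgroup (alternatingGroup (Fin n)) {b, a ^ 2} := by ring
    · intro y hy
      rcases List.mem_append.1 hy with h' | h'
      exacts [hm1B y h', hm2B y h']
    · rw [List.prod_append, hm1p, hm2p, hlgp, hlhp, MonoidHom.inl_apply, MonoidHom.inr_apply,
        Prod.mk_mul_mk, mul_one, one_mul]
  · have hempty : {k : ℕ | ∃ l : List (Equiv.Perm (Fin n) × Equiv.Perm (Fin n)), l.length = k ∧
        (∀ x ∈ l, x ∈ ({(a, b), (b, a)} : Set (Equiv.Perm (Fin n) × Equiv.Perm (Fin n)))) ∧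
          l.prod = (g, h)} = ∅ := by
      ext k
      simp only [Set.mem_setOf_eq, Set.mem_empty_iff_false, iff_false]
      rintro ⟨l, -, hm, hp⟩
      exact hex ⟨l, hm, hp⟩
    unfold wordLength
    rw [hempty, Nat.sInf_empty]
    exact Nat.zero_le _
end

section
/- There exist absolute constants C > 0 and c > 0 such that for every integer n ≥ 5 there is a generating set S of A_n^2 of size two for which diam(A_n^2, S) ≤ C · n · exp((c+1) · (log n)^4 · log log n). -/
namespace DiamAux

open Equiv Equiv.Perm

lemma wordLength_le {G : Type*} [Group G] (A : Set G) (g : G) (l : List G)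
    (hl : ∀ x ∈ l, x ∈ A) (hp : l.prod = g) : wordLength A g ≤ l.length :=
  Nat.sInf_le ⟨l, rfl, hl, hp⟩

lemma diam_le {G : Type*} [Group G] [Nonempty G] (A : Set G) (D : ℕ)
    (h : ∀ g : G, wordLength A g ≤ D) : diam G A ≤ D :=
  ciSup_le h

/-- concatenate words for each letter of a list, through a hom. -/
lemma word_concat {H K : Type*} [Monoid H] [Monoid K] (φ : H →* K) (A : Set K) (c : ℕ) :
    ∀ (lT : List H), (∀ σ ∈ lT, ∃ w : List K, (∀ x ∈ w, x ∈ A) ∧ w.length ≤ c ∧ w.prod = φ σ) →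
      ∃ W : List K, (∀ x ∈ W, x ∈ A) ∧ W.length ≤ c * lT.length ∧ W.prod = φ lT.prod
  | [], _ => ⟨[], by simp⟩
  | σ :: lT, h => by
      obtain ⟨w, hw1, hw2, hw3⟩ := h σ List.mem_cons_self
      obtain ⟨W, hW1, hW2, hW3⟩ := word_concat φ A c lT (fun τ hτ => h τ (List.mem_cons_of_mem _ hτ))
      refine ⟨w ++ W, ?_, ?_, ?_⟩
      · intro x hx; rcases List.mem_append.1 hx with h | h
        exacts [hw1 x h, hW1 x h]
      · simp only [List.length_append, List.length_cons]
        calc w.length + W.length ≤ c + c * lT.length := by omega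
          _ = c * (lT.length + 1) := by ring
      · simp [hw3, hW3]

section C3
variable {α : Type*} [DecidableEq α]

/-- the 3-cycle (x y z) -/
def c3 (x y z : α) : Equiv.Perm α := Equiv.swap x y * Equiv.swap y z

variable {x y z : α}

lemma c3_apply_left (hxy : x ≠ y) (hxz : x ≠ z) : c3 x y z x = y := by
  simp only [c3, Equiv.Perm.mul_apply, Equiv.swap_apply_of_ne_of_ne hxy hxz,
    Equiv.swap_apply_left]

lemma c3_apply_mid (hxz : x ≠ z) (hyz : y ≠ z) : c3 x y z y = z := by
  simp only [c3, Equiv.Perm.mul_apply, Equiv.swap_apply_left,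
    Equiv.swap_apply_of_ne_of_ne (Ne.symm hxz) (Ne.symm hyz)]

lemma c3_apply_right : c3 x y z z = x := by
  simp only [c3, Equiv.Perm.mul_apply, Equiv.swap_apply_right, Equiv.swap_apply_right]

lemma c3_apply_of_ne {u : α} (hx : u ≠ x) (hy : u ≠ y) (hz : u ≠ z) : c3 x y z u = u := by
  simp [c3, Equiv.swap_apply_of_ne_of_ne hy hz, Equiv.swap_apply_of_ne_of_ne hx hy]

lemma c3_inv : (c3 x y z)⁻¹ = c3 z y x := by
  simp [c3, mul_inv_rev, Equiv.swap_comm z y, Equiv.swap_comm y x]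

lemma c3_rot (hxy : x ≠ y) (hxz : x ≠ z) (hyz : y ≠ z) : c3 x y z = c3 y z x := by
  ext u
  rcases eq_or_ne u x with rfl | hx
  · rw [c3_apply_left hxy hxz, c3_apply_right]
  rcases eq_or_ne u y with rfl | hy
  · rw [c3_apply_mid hxz hyz, c3_apply_left hyz (Ne.symm hxy)]
  rcases eq_or_ne u z with rfl | hz
  · rw [c3_apply_right, c3_apply_mid (Ne.symm hxy) (Ne.symm hxz)]
  · rw [c3_apply_of_ne hx hy hz, c3_apply_of_ne hy hz hx]

lemma sign_c3 (hxy : x ≠ y) (hyz : y ≠ z) [Fintype α] : Equiv.Perm.sign (c3 x y z) = 1 := by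
  simp [c3, Equiv.Perm.sign_swap hxy, Equiv.Perm.sign_swap hyz]

lemma c3_conj (σ : Equiv.Perm α) : σ * c3 x y z * σ⁻¹ = c3 (σ x) (σ y) (σ z) := by
  rw [c3, c3, Equiv.swap_apply_apply σ x y, Equiv.swap_apply_apply σ y z]
  group

lemma c3_pow_three (hxy : x ≠ y) (hxz : x ≠ z) (hyz : y ≠ z) : (c3 x y z) ^ 3 = 1 := by
  ext u
  rcases eq_or_ne u x with rfl | hx
  · simp [pow_succ, c3_apply_left hxy hxz, c3_apply_mid hxz hyz, c3_apply_right]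
  rcases eq_or_ne u y with rfl | hy
  · simp [pow_succ, c3_apply_left hxy hxz, c3_apply_mid hxz hyz, c3_apply_right]
  rcases eq_or_ne u z with rfl | hz
  · simp [pow_succ, c3_apply_left hxy hxz, c3_apply_mid hxz hyz, c3_apply_right]
  · simp [pow_succ, c3_apply_of_ne hx hy hz]

lemma c3_sq (hxy : x ≠ y) (hxz : x ≠ z) (hyz : y ≠ z) : (c3 x y z) ^ 2 = (c3 x y z)⁻¹ := by
  have h := c3_pow_three hxy hxz hyz
  rw [pow_succ] at h
  exact eq_inv_of_mul_eq_one_left h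

end C3

lemma cycleRange_pow_apply {N : ℕ} (i : Fin (N+1)) (j : ℕ) :
    ∀ (x : Fin (N+1)) (hx : (x:ℕ) + j ≤ (i:ℕ)),
      ((Fin.cycleRange i)^j) x = ⟨(x:ℕ) + j, by omega⟩ := by
  induction j with
  | zero => intro x hx; simp
  | succ j ih =>
    intro x hx
    have hlt : x < i := by
      rw [Fin.lt_iff_val_lt_val]; omega
    have h1 : Fin.cycleRange i x = ⟨(x:ℕ) + 1, by omega⟩ := by
      apply Fin.ext
      rw [Fin.coe_cycleRange_of_lt hlt]
    rw [pow_succ, Equiv.Perm.mul_apply, h1, ih ⟨(x:ℕ)+1, by omega⟩ (by simp; omega)]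
    apply Fin.ext; simp; omega

lemma cycleRange_pow_apply_of_gt {N : ℕ} (i : Fin (N+1)) (j : ℕ) (x : Fin (N+1))
    (hx : (i:ℕ) < (x:ℕ)) : ((Fin.cycleRange i)^j) x = x := by
  induction j with
  | zero => simp
  | succ j ih =>
    rw [pow_succ, Equiv.Perm.mul_apply, Fin.cycleRange_of_gt (by rwa [Fin.lt_iff_val_lt_val]), ih]

lemma cycleRange_pow_period {N : ℕ} (i : Fin (N+1)) :
    (Fin.cycleRange i)^((i:ℕ)+1) = 1 := by
  ext x
  rcases le_or_gt (x:ℕ) (i:ℕ) with hx | hx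
  · have hsplit : (i:ℕ)+1 = ((x:ℕ)+1) + ((i:ℕ) - (x:ℕ)) := by omega
    rw [hsplit, pow_add, Equiv.Perm.mul_apply,
      cycleRange_pow_apply i ((i:ℕ) - (x:ℕ)) x (by omega)]
    have h2 : (⟨(x:ℕ) + ((i:ℕ) - (x:ℕ)), by omega⟩ : Fin (N+1)) = i := by
      apply Fin.ext; simp; omega
    rw [h2, pow_succ, Equiv.Perm.mul_apply, Fin.cycleRange_self,
      cycleRange_pow_apply i (x:ℕ) 0 (by simp; omega)]
    simp
  · rw [cycleRange_pow_apply_of_gt i _ x hx, Equiv.Perm.one_apply]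

variable (m : ℕ)

def pp : Fin (m+5) := ⟨m+3, by omega⟩
def qq : Fin (m+5) := ⟨m+4, by omega⟩
def i0 : Fin (m+5) := ⟨m+2, by omega⟩
def aa : Equiv.Perm (Fin (m+5)) := c3 (pp m) (qq m) 0
def b0 : Equiv.Perm (Fin (m+5)) := Fin.cycleRange (i0 m)
def bb : Equiv.Perm (Fin (m+5)) := (Equiv.swap (pp m) (qq m))^(m+4) * b0 m

lemma pp_ne_qq : pp m ≠ qq m := by simp [pp, qq, Fin.ext_iff]
lemma pp_ne_zero : pp m ≠ 0 := by simp [pp, Fin.ext_iff]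
lemma qq_ne_zero : qq m ≠ 0 := by simp [qq, Fin.ext_iff]

lemma b0_apply_pp : b0 m (pp m) = pp m :=
  Fin.cycleRange_of_gt (by simp [i0, pp, Fin.lt_iff_val_lt_val])

lemma b0_apply_qq : b0 m (qq m) = qq m :=
  Fin.cycleRange_of_gt (by simp [i0, qq, Fin.lt_iff_val_lt_val])

lemma swap_comm_b0 : Commute (Equiv.swap (pp m) (qq m)) (b0 m) := by
  apply Equiv.Perm.Disjoint.commute
  intro x
  by_cases hx : (x:ℕ) ≤ m+2
  · left
    apply Equiv.swap_apply_of_ne_of_ne <;> · simp [pp, qq, Fin.ext_iff]; omega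
  · right
    rcases (by omega : (x:ℕ) = m+3 ∨ (x:ℕ) = m+4) with h | h
    · have : x = pp m := by simp [pp, Fin.ext_iff, h]
      rw [this, b0_apply_pp]
    · have : x = qq m := by simp [qq, Fin.ext_iff, h]
      rw [this, b0_apply_qq]

lemma bb_pow (k : ℕ) : (bb m)^k = (Equiv.swap (pp m) (qq m))^((m+4)*k) * (b0 m)^k := by
  rw [bb, Commute.mul_pow ((swap_comm_b0 m).pow_left (m+4)), ← pow_mul]

lemma swap_pow_even {α : Type*} [DecidableEq α] (x y : α) {j : ℕ} (h : Even j) :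
    (Equiv.swap x y)^j = 1 := by
  obtain ⟨t, rfl⟩ := h
  rw [← two_mul, pow_mul, sq, Equiv.swap_mul_self, one_pow]

lemma swap_pow_odd {α : Type*} [DecidableEq α] (x y : α) {j : ℕ} (h : Odd j) :
    (Equiv.swap x y)^j = Equiv.swap x y := by
  obtain ⟨t, rfl⟩ := h
  rw [pow_add, pow_mul, sq, Equiv.swap_mul_self, one_pow, one_mul, pow_one]

lemma swap_pow_fix (j : ℕ) (x : Fin (m+5)) (hx : (x:ℕ) ≤ m+2) :
    ((Equiv.swap (pp m) (qq m))^j) x = x := by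
  rcases Nat.even_or_odd j with h | h
  · rw [swap_pow_even _ _ h]; rfl
  · rw [swap_pow_odd _ _ h]
    apply Equiv.swap_apply_of_ne_of_ne <;> · simp [pp, qq, Fin.ext_iff]; omega

lemma bb_pow_zero (k : ℕ) (hk : k ≤ m+2) : ((bb m)^k) 0 = ⟨k, by omega⟩ := by
  rw [bb_pow, Equiv.Perm.mul_apply, b0]
  rw [cycleRange_pow_apply (N := m+4) (i0 m) k 0 (by simp [i0]; omega)]

  rw [swap_pow_fix m _ _ (by simpa using hk)]
  apply Fin.ext; simp

lemma bb_pow_pq (k : ℕ) :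
    (((bb m)^k) (pp m) = pp m ∧ ((bb m)^k) (qq m) = qq m) ∨
    (((bb m)^k) (pp m) = qq m ∧ ((bb m)^k) (qq m) = pp m) := by
  have hb0p : ((b0 m)^k) (pp m) = pp m :=
    cycleRange_pow_apply_of_gt (N := m+4) (i0 m) k (pp m) (by simp [i0, pp])
  have hb0q : ((b0 m)^k) (qq m) = qq m :=
    cycleRange_pow_apply_of_gt (N := m+4) (i0 m) k (qq m) (by simp [i0, qq])
  rw [bb_pow]
  rcases Nat.even_or_odd ((m+4)*k) with h | h
  · left
    simp [Equiv.Perm.mul_apply, hb0p, hb0q, swap_pow_even _ _ h]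
  · right
    simp [Equiv.Perm.mul_apply, hb0p, hb0q, swap_pow_odd _ _ h]


lemma bb_period : (bb m)^(m+3) = 1 := by
  rw [bb_pow]
  have h1 : ((b0 m) : Equiv.Perm (Fin (m+5)))^(m+3) = 1 := by
    have := cycleRange_pow_period (N := m+4) (i0 m)
    exact this
  have h2 : (Equiv.swap (pp m) (qq m))^((m+4)*(m+3)) = 1 :=
    swap_pow_even _ _ (by rw [Nat.mul_comm]; exact Nat.even_mul_succ_self (m+3))
  rw [h1, h2, one_mul]

lemma sign_bb : Equiv.Perm.sign (bb m) = 1 := by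
  rw [bb, map_mul, map_pow, Equiv.Perm.sign_swap (pp_ne_qq m), b0, Fin.sign_cycleRange]
  simp [i0]
  rw [← pow_add]
  exact Even.neg_one_pow ⟨m+3, by omega⟩


section Chunk4
variable (m : ℕ)

lemma pp_ne_block {x : Fin (m+5)} (hx : (x:ℕ) ≤ m+2) : pp m ≠ x := by
  simp only [pp, Fin.ext_iff, ne_eq]; omega

lemma qq_ne_block {x : Fin (m+5)} (hx : (x:ℕ) ≤ m+2) : qq m ≠ x := by
  simp only [qq, Fin.ext_iff, ne_eq]; omega

/-- words for conjugates bb^k * aa^e * bb^{-k} -/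
lemma conj_word (kv e : ℕ) (hk : kv ≤ m+2) (he : e ≤ 2) :
    ∃ w : List (Equiv.Perm (Fin (m+5))), (∀ x ∈ w, x ∈ ({aa m, bb m} : Set _)) ∧
      w.length ≤ m+5 ∧ w.prod = (bb m)^kv * (aa m)^e * ((bb m)^kv)⁻¹ := by
  refine ⟨List.replicate kv (bb m) ++ List.replicate e (aa m) ++ List.replicate (m+3-kv) (bb m),
    ?_, ?_, ?_⟩
  · intro x hx
    simp only [List.mem_append, List.mem_replicate] at hx
    rcases hx with (⟨_, rfl⟩ | ⟨_, rfl⟩) | ⟨_, rfl⟩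
    · right; rfl
    · left; rfl
    · right; rfl
  · simp only [List.length_append, List.length_replicate]; omega
  · rw [List.prod_append, List.prod_append, List.prod_replicate, List.prod_replicate,
      List.prod_replicate]
    congr 1
    rw [eq_inv_iff_mul_eq_one, ← pow_add]
    have : m+3-kv+kv = m+3 := by omega
    rw [this, bb_period]

def TT : Set (Equiv.Perm (Fin (m+5))) :=
  {g | ∃ k : Fin (m+5), (k:ℕ) ≤ m+2 ∧ (g = c3 (pp m) (qq m) k ∨ g = (c3 (pp m) (qq m) k)⁻¹)}

/-- every element of TT is a word of length ≤ m+5 in {aa, bb} -/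
lemma t_word (g : Equiv.Perm (Fin (m+5))) (hg : g ∈ TT m) :
    ∃ w : List (Equiv.Perm (Fin (m+5))), (∀ x ∈ w, x ∈ ({aa m, bb m} : Set _)) ∧
      w.length ≤ m+5 ∧ w.prod = g := by
  obtain ⟨k, hk, hg⟩ := hg
  have hppk : pp m ≠ k := pp_ne_block m hk
  have hqqk : qq m ≠ k := qq_ne_block m hk
  have hconj1 : (bb m)^(k:ℕ) * aa m * ((bb m)^(k:ℕ))⁻¹
      = c3 (((bb m)^(k:ℕ)) (pp m)) (((bb m)^(k:ℕ)) (qq m)) (((bb m)^(k:ℕ)) 0) := by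
    rw [aa, c3_conj]
  have hz : ((bb m)^(k:ℕ)) 0 = k := by
    rw [bb_pow_zero m (k:ℕ) hk]
  have hconj2 : (bb m)^(k:ℕ) * (aa m)^2 * ((bb m)^(k:ℕ))⁻¹
      = ((bb m)^(k:ℕ) * aa m * ((bb m)^(k:ℕ))⁻¹)^2 := by
    rw [pow_two, pow_two]; simp [mul_assoc]
  set t := c3 (pp m) (qq m) k with ht
  have htsq : t^2 = t⁻¹ := c3_sq (pp_ne_qq m) hppk hqqk
  have hqp : c3 (qq m) (pp m) k = t⁻¹ := by
    rw [ht, c3_inv]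
    exact (c3_rot (Ne.symm hqqk) (Ne.symm hppk) (Ne.symm (pp_ne_qq m))).symm
  rcases bb_pow_pq m (k:ℕ) with ⟨h1, h2⟩ | ⟨h1, h2⟩
  · rw [h1, h2, hz] at hconj1
    rcases hg with rfl | rfl
    · obtain ⟨w, hw1, hw2, hw3⟩ := conj_word m (k:ℕ) 1 hk (by norm_num)
      exact ⟨w, hw1, hw2, by rw [hw3, pow_one, hconj1]⟩
    · obtain ⟨w, hw1, hw2, hw3⟩ := conj_word m (k:ℕ) 2 hk (by norm_num)
      refine ⟨w, hw1, hw2, ?_⟩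
      rw [hw3, hconj2, hconj1, ← ht, htsq]
  · rw [h1, h2, hz, hqp] at hconj1
    rcases hg with rfl | rfl
    · obtain ⟨w, hw1, hw2, hw3⟩ := conj_word m (k:ℕ) 2 hk (by norm_num)
      refine ⟨w, hw1, hw2, ?_⟩
      rw [hw3, hconj2, hconj1, inv_pow, htsq, inv_inv]
    · obtain ⟨w, hw1, hw2, hw3⟩ := conj_word m (k:ℕ) 1 hk (by norm_num)
      exact ⟨w, hw1, hw2, by rw [hw3, pow_one, hconj1]⟩

lemma pq_cases (π : Equiv.Perm (Fin (m+5)))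
    (hfix : ∀ x : Fin (m+5), (x:ℕ) < m+3 → π x = x) (v : Fin (m+5)) (hv : (v:ℕ) ≥ m+3) :
    π v = pp m ∨ π v = qq m := by
  set w := π v with hw
  by_cases hlt : (w:ℕ) < m+3
  · exfalso
    have h1 : π w = w := hfix w hlt
    have : w = v := π.injective (by rw [h1, ← hw])
    omega
  · have := w.isLt
    rcases (by omega : (w:ℕ) = m+3 ∨ (w:ℕ) = m+4) with h | h
    · left; apply Fin.ext; simp [pp, h]
    · right; apply Fin.ext; simp [qq, h]

lemma base_case (π : Equiv.Perm (Fin (m+5))) (hs : Equiv.Perm.sign π = 1)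
    (hfix : ∀ x : Fin (m+5), (x:ℕ) < m+3 → π x = x) : π = 1 := by
  have hppv : (pp m : Fin (m+5)).val ≥ m+3 := by simp [pp]
  have hqqv : (qq m : Fin (m+5)).val ≥ m+3 := by simp [qq]
  rcases pq_cases m π hfix (pp m) hppv with hp | hp
  · have hq : π (qq m) = qq m := by
      rcases pq_cases m π hfix (qq m) hqqv with h | h
      · exact absurd (π.injective (h.trans hp.symm)) (pp_ne_qq m).symm
      · exact h
    ext x
    rcases lt_or_ge (x:ℕ) (m+3) with hx | hx
    · rw [hfix x hx]; rfl
    · have := x.isLt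
      rcases (by omega : (x:ℕ) = m+3 ∨ (x:ℕ) = m+4) with h | h
      · have : x = pp m := by simp only [pp, Fin.ext_iff, h]
        rw [this, hp]; rfl
      · have : x = qq m := by simp only [qq, Fin.ext_iff, h]
        rw [this, hq]; rfl
  · have hq : π (qq m) = pp m := by
      rcases pq_cases m π hfix (qq m) hqqv with h | h
      · exact h
      · exact absurd (π.injective (h.trans hp.symm)) (pp_ne_qq m).symm
    exfalso
    have hπ : π = Equiv.swap (pp m) (qq m) := by
      ext x
      rcases lt_or_ge (x:ℕ) (m+3) with hx | hx
      · rw [hfix x hx, Equiv.swap_apply_of_ne_of_ne]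
        · exact (pp_ne_block m (by omega)).symm
        · exact (qq_ne_block m (by omega)).symm
      · have := x.isLt
        rcases (by omega : (x:ℕ) = m+3 ∨ (x:ℕ) = m+4) with h | h
        · have : x = pp m := by simp only [pp, Fin.ext_iff, h]
          rw [this, hp, Equiv.swap_apply_left]
        · have : x = qq m := by simp only [qq, Fin.ext_iff, h]
          rw [this, hq, Equiv.swap_apply_right]
    rw [hπ, Equiv.Perm.sign_swap (pp_ne_qq m)] at hs
    exact absurd hs (by decide)

lemma sort : ∀ (d : ℕ) (π : Equiv.Perm (Fin (m+5))), Equiv.Perm.sign π = 1 →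
    (∀ x : Fin (m+5), (x:ℕ) < m+3-d → π x = x) →
    ∃ l : List (Equiv.Perm (Fin (m+5))),
      (∀ g ∈ l, g ∈ TT m) ∧ l.length ≤ 2*d ∧ l.prod = π := by
  intro d
  induction d with
  | zero =>
    intro π hs hfix
    refine ⟨[], by simp, by simp, ?_⟩
    rw [List.prod_nil, base_case m π hs (fun x hx => hfix x (by omega))]
  | succ d ih =>
    intro π hs hfix
    set Kv := m+2-d with hKv
    set K : Fin (m+5) := ⟨Kv, by omega⟩ with hK
    have hKblock : (K:ℕ) ≤ m+2 := by simp [hK]; omega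
    by_cases hπK : π K = K
    · have hfix' : ∀ x : Fin (m+5), (x:ℕ) < m+3-d → π x = x := by
        intro x hx
        rcases lt_or_ge (x:ℕ) Kv with h | h
        · exact hfix x (by omega)
        · have hxK : (x:ℕ) = Kv := by omega
          have : x = K := by simp only [hK, Fin.ext_iff, hxK]
          rw [this, hπK]
      obtain ⟨l, hl1, hl2, hl3⟩ := ih π hs hfix'
      exact ⟨l, hl1, by omega, hl3⟩
    · set j := π K with hj
      have hjK : j ≠ K := hπK
      have hjval : Kv ≤ (j:ℕ) := by
        by_contra hcon
        push_neg at hcon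
        have h1 : π j = j := hfix j (by omega)
        exact hjK (π.injective (by rw [h1, ← hj]))
      have step : ∀ (u : Equiv.Perm (Fin (m+5))) (ulist : List (Equiv.Perm (Fin (m+5)))),
          (∀ g ∈ ulist, g ∈ TT m) → ulist.length ≤ 2 → ulist.prod = u⁻¹ →
          Equiv.Perm.sign u = 1 → (∀ x : Fin (m+5), (x:ℕ) < Kv → u x = x) → u j = K →
          ∃ l : List (Equiv.Perm (Fin (m+5))),
            (∀ g ∈ l, g ∈ TT m) ∧ l.length ≤ 2*(d+1) ∧ l.prod = π := by
        intro u ulist h1 h2 h3 h4 h5 h6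
        have hfix' : ∀ x : Fin (m+5), (x:ℕ) < m+3-d → (u * π) x = x := by
          intro x hx
          rcases lt_or_ge (x:ℕ) Kv with h | h
          · rw [Equiv.Perm.mul_apply, hfix x (by omega), h5 x h]
          · have hxK : (x:ℕ) = Kv := by omega
            have hxK' : x = K := by simp only [hK, Fin.ext_iff, hxK]
            rw [hxK', Equiv.Perm.mul_apply, ← hj, h6]
        obtain ⟨l', hl1, hl2, hl3⟩ := ih (u * π) (by rw [map_mul, h4, hs, one_mul]) hfix'
        refine ⟨ulist ++ l', ?_, ?_, ?_⟩
        · intro g hg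
          rcases List.mem_append.1 hg with h | h
          exacts [h1 g h, hl1 g h]
        · rw [List.length_append]; omega
        · rw [List.prod_append, h3, hl3, ← mul_assoc, inv_mul_cancel, one_mul]
      have hppK : pp m ≠ K := pp_ne_block m hKblock
      have hqqK : qq m ≠ K := qq_ne_block m hKblock
      have hKmem : c3 (pp m) (qq m) K ∈ TT m := ⟨K, hKblock, Or.inl rfl⟩
      have hKmem' : (c3 (pp m) (qq m) K)⁻¹ ∈ TT m := ⟨K, hKblock, Or.inr rfl⟩
      have hinvK : (c3 (pp m) (qq m) K)⁻¹ = c3 K (qq m) (pp m) := c3_inv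
      by_cases hjq : j = qq m
      · apply step (c3 (pp m) (qq m) K) [(c3 (pp m) (qq m) K)⁻¹]
        · intro g hg; rw [List.mem_singleton] at hg; rw [hg]; exact hKmem'
        · simp
        · simp
        · exact sign_c3 (pp_ne_qq m) hqqK
        · intro x hx
          exact c3_apply_of_ne (fun h => by simp [pp, Fin.ext_iff] at h; omega)
            (fun h => by simp [qq, Fin.ext_iff] at h; omega)
            (fun h => by simp [hK, Fin.ext_iff] at h; omega)
        · rw [hjq]; exact c3_apply_mid hppK hqqK
      · by_cases hjp : j = pp m
        · apply step (c3 (pp m) (qq m) K)⁻¹ [c3 (pp m) (qq m) K]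
          · intro g hg; rw [List.mem_singleton] at hg; rw [hg]; exact hKmem
          · simp
          · simp
          · simp [sign_c3 (pp_ne_qq m) hqqK]
          · intro x hx
            rw [hinvK]
            exact c3_apply_of_ne (fun h => by simp [hK, Fin.ext_iff] at h; omega)
              (fun h => by simp [qq, Fin.ext_iff] at h; omega)
              (fun h => by simp [pp, Fin.ext_iff] at h; omega)
          · rw [hjp, hinvK]; exact c3_apply_right
        · have hjblock : (j:ℕ) ≤ m+2 := by
            have := j.isLt
            rcases (by omega : (j:ℕ) ≤ m+2 ∨ (j:ℕ) = m+3 ∨ (j:ℕ) = m+4) with h | h | h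
            · exact h
            · exact absurd (by simp only [pp, Fin.ext_iff, h] : j = pp m) hjp
            · exact absurd (by simp only [qq, Fin.ext_iff, h] : j = qq m) hjq
          have hppj : pp m ≠ j := pp_ne_block m hjblock
          have hqqj : qq m ≠ j := qq_ne_block m hjblock
          have hjmem' : (c3 (pp m) (qq m) j)⁻¹ ∈ TT m := ⟨j, hjblock, Or.inr rfl⟩
          apply step (c3 K (qq m) (pp m) * c3 (pp m) (qq m) j)
            [(c3 (pp m) (qq m) j)⁻¹, c3 (pp m) (qq m) K]
          · intro g hg
            rcases List.mem_cons.1 hg with h | h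
            · rw [h]; exact hjmem'
            · rw [List.mem_singleton] at h; rw [h]; exact hKmem
          · simp
          · rw [mul_inv_rev, ← hinvK, inv_inv]
            simp
          · rw [map_mul, sign_c3 (Ne.symm hqqK) (Ne.symm (pp_ne_qq m)),
              sign_c3 (pp_ne_qq m) hqqj, one_mul]
          · intro x hx
            have hinner : (c3 (pp m) (qq m) j) x = x :=
              c3_apply_of_ne (x := pp m) (y := qq m) (z := j)
                (fun h => by simp [pp, Fin.ext_iff] at h; omega)
                (fun h => by simp [qq, Fin.ext_iff] at h; omega)
                (fun h => by rw [h] at hx; omega)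
            have houter : (c3 K (qq m) (pp m)) x = x :=
              c3_apply_of_ne (x := K) (y := qq m) (z := pp m)
                (fun h => by simp [hK, Fin.ext_iff] at h; omega)
                (fun h => by simp [qq, Fin.ext_iff] at h; omega)
                (fun h => by simp [pp, Fin.ext_iff] at h; omega)
            rw [Equiv.Perm.mul_apply, hinner, houter]
          · rw [Equiv.Perm.mul_apply, c3_apply_right]
            exact c3_apply_right


def bg : Equiv.Perm (Fin (m+5)) := if 3 ∣ (m+3) then aa m * bb m else bb m
def MM : ℕ := if 3 ∣ (m+3) then (if Even m then m+5 else m+4) else m+3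

lemma MM_not_dvd : ¬ (3 ∣ MM m) := by
  unfold MM; split_ifs with h1 h2 <;> omega

lemma MM_ge : 2 ≤ MM m := by unfold MM; split_ifs <;> omega
lemma MM_le : MM m ≤ m+5 := by unfold MM; split_ifs <;> omega

lemma sign_aa : Equiv.Perm.sign (aa m) = 1 := sign_c3 (pp_ne_qq m) (qq_ne_zero m)

lemma swap_fix_block (x : Fin (m+5)) (hx : (x:ℕ) ≤ m+2) :
    (Equiv.swap (pp m) (qq m)) x = x :=
  Equiv.swap_apply_of_ne_of_ne (Ne.symm (pp_ne_block m hx)) (Ne.symm (qq_ne_block m hx))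

lemma aa_fix_block (x : Fin (m+5)) (hx1 : 1 ≤ (x:ℕ)) (hx2 : (x:ℕ) ≤ m+2) : aa m x = x :=
  c3_apply_of_ne (fun h => by simp [pp, Fin.ext_iff] at h; omega)
    (fun h => by simp [qq, Fin.ext_iff] at h; omega)
    (fun h => by rw [h] at hx1; simp at hx1)

lemma aa_zero : aa m 0 = pp m := c3_apply_right
lemma aa_pp : aa m (pp m) = qq m := c3_apply_left (pp_ne_qq m) (pp_ne_zero m)
lemma aa_qq : aa m (qq m) = 0 := c3_apply_mid (pp_ne_zero m) (qq_ne_zero m)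

lemma b0_block_lt (x : Fin (m+5)) (hx : (x:ℕ) < m+2) : b0 m x = ⟨(x:ℕ)+1, by omega⟩ := by
  apply Fin.ext
  rw [b0, Fin.coe_cycleRange_of_lt (by simp [i0, Fin.lt_iff_val_lt_val] <;> omega)]

lemma b0_top : b0 m (i0 m) = 0 := by rw [b0, Fin.cycleRange_self]

lemma ab_eq : aa m * bb m = if Even m then Fin.cycleRange (⟨m+4, by omega⟩ : Fin (m+5))
    else Fin.cycleRange (⟨m+3, by omega⟩ : Fin (m+5)) := by
  rcases Nat.even_or_odd m with hm | hm
  · rw [if_pos hm]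
    have hbb : bb m = b0 m := by
      rw [bb, swap_pow_even _ _ (by obtain ⟨k,hk⟩ := hm; exact ⟨k+2, by omega⟩), one_mul]
    ext x
    rw [Equiv.Perm.mul_apply, hbb]
    rcases (by omega : (x:ℕ) < m+2 ∨ (x:ℕ) = m+2 ∨ (x:ℕ) = m+3 ∨ (x:ℕ) = m+4) with h | h | h | h
    · rw [b0_block_lt m x h, aa_fix_block m _ (by simp) (by simp; omega),
        Fin.coe_cycleRange_of_lt (by simp [Fin.lt_iff_val_lt_val]; omega)]
      all_goals simp
    · have hx : x = i0 m := by simp [i0, Fin.ext_iff, h]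
      rw [hx, b0_top, aa_zero,
        Fin.coe_cycleRange_of_lt (by simp [i0, Fin.lt_iff_val_lt_val] <;> omega)]
      all_goals simp [pp, i0]
    · have hx : x = pp m := by simp [pp, Fin.ext_iff, h]
      rw [hx, b0_apply_pp, aa_pp,
        Fin.coe_cycleRange_of_lt (by simp [pp, Fin.lt_iff_val_lt_val] <;> omega)]
      all_goals simp [qq, pp]
    · have hx : x = qq m := by simp [qq, Fin.ext_iff, h]
      have hq4 : (qq m) = (⟨m+4, by omega⟩ : Fin (m+5)) := by simp [qq, Fin.ext_iff]
      rw [hx, b0_apply_qq, aa_qq, hq4, Fin.cycleRange_self]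
      all_goals simp
  · rw [if_neg (by simpa using hm)]
    have hbb : bb m = Equiv.swap (pp m) (qq m) * b0 m := by
      rw [bb, swap_pow_odd _ _ (by obtain ⟨k,hk⟩ := hm; exact ⟨k+2, by omega⟩)]
    ext x
    rw [Equiv.Perm.mul_apply, hbb, Equiv.Perm.mul_apply]
    rcases (by omega : (x:ℕ) < m+2 ∨ (x:ℕ) = m+2 ∨ (x:ℕ) = m+3 ∨ (x:ℕ) = m+4) with h | h | h | h
    · rw [b0_block_lt m x h, swap_fix_block m _ (by simp; omega),
        aa_fix_block m _ (by simp) (by simp; omega),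
        Fin.coe_cycleRange_of_lt (by simp [Fin.lt_iff_val_lt_val]; omega)]
      all_goals simp
    · have hx : x = i0 m := by simp [i0, Fin.ext_iff, h]
      rw [hx, b0_top, swap_fix_block m _ (by simp), aa_zero,
        Fin.coe_cycleRange_of_lt (by simp [i0, Fin.lt_iff_val_lt_val] <;> omega)]
      all_goals simp [pp, i0]
    · have hx : x = pp m := by simp [pp, Fin.ext_iff, h]
      have hp3 : (pp m) = (⟨m+3, by omega⟩ : Fin (m+5)) := by simp [pp, Fin.ext_iff]
      rw [hx, b0_apply_pp, Equiv.swap_apply_left, aa_qq, hp3, Fin.cycleRange_self]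
      all_goals simp
    · have hx : x = qq m := by simp [qq, Fin.ext_iff, h]
      rw [hx, b0_apply_qq, Equiv.swap_apply_right, aa_pp,
        Fin.cycleRange_of_gt (by simp [qq, Fin.lt_iff_val_lt_val] <;> omega)]

lemma bg_period : (bg m)^(MM m) = 1 := by
  unfold bg MM
  split_ifs with h1 h2
  · rw [ab_eq, if_pos h2]
    have := cycleRange_pow_period (N := m+4) (⟨m+4, by omega⟩ : Fin (m+5))
    simpa using this
  · rw [ab_eq, if_neg h2]
    have := cycleRange_pow_period (N := m+4) (⟨m+3, by omega⟩ : Fin (m+5))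
    simpa using this
  · exact bb_period m

lemma sign_bg : Equiv.Perm.sign (bg m) = 1 := by
  unfold bg
  split_ifs with h1
  · rw [map_mul, sign_aa, sign_bb, one_mul]
  · exact sign_bb m

lemma aa_cube : (aa m)^3 = 1 :=
  c3_pow_three (pp_ne_qq m) (pp_ne_zero m) (qq_ne_zero m)

/-- every even permutation is a word in {aa, bg} of length ≤ 3*((m+5)*(2*(m+3))) -/
lemma even_word (π : Equiv.Perm (Fin (m+5))) (hs : Equiv.Perm.sign π = 1) :
    ∃ W : List (Equiv.Perm (Fin (m+5))), (∀ x ∈ W, x ∈ ({aa m, bg m} : Set _)) ∧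
      W.length ≤ 3*((m+5)*(2*(m+3))) ∧ W.prod = π := by
  obtain ⟨l, hl1, hl2, hl3⟩ := sort m (m+3) π hs (fun x hx => absurd hx (by omega))
  obtain ⟨W1, hW1, hW2, hW3⟩ := word_concat (MonoidHom.id _) ({aa m, bb m} : Set _) (m+5) l
    (fun σ hσ => t_word m σ (hl1 σ hσ))
  have hletters : ∀ σ ∈ W1, ∃ w : List (Equiv.Perm (Fin (m+5))),
      (∀ x ∈ w, x ∈ ({aa m, bg m} : Set _)) ∧ w.length ≤ 3 ∧ w.prod = (MonoidHom.id _) σ := by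
    intro σ hσ
    rcases hW1 σ hσ with h | h
    · exact ⟨[aa m], by simp, by simp, by simp [h]⟩
    · have h' : σ = bb m := h
      by_cases h3 : 3 ∣ (m+3)
      · refine ⟨[aa m, aa m, bg m], by simp, by simp, ?_⟩
        rw [MonoidHom.id_apply, h', List.prod_cons, List.prod_cons, List.prod_singleton,
          bg, if_pos h3]
        have hgr : aa m * (aa m * (aa m * bb m)) = (aa m)^3 * bb m := by
          rw [pow_succ, pow_succ, pow_one, mul_assoc, mul_assoc]
        rw [hgr, aa_cube, one_mul]
      · refine ⟨[bg m], by simp, by simp, ?_⟩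
        rw [MonoidHom.id_apply, h', List.prod_singleton, bg, if_neg h3]
  obtain ⟨W, hWa, hWb, hWc⟩ := word_concat (MonoidHom.id _) ({aa m, bg m} : Set _) 3 W1 hletters
  refine ⟨W, hWa, ?_, by rw [hWc]; simp [hW3, hl3]⟩
  calc W.length ≤ 3 * W1.length := hWb
    _ ≤ 3 * ((m+5) * l.length) := by
        apply Nat.mul_le_mul_left
        exact hW2
    _ ≤ 3 * ((m+5) * (2*(m+3))) := by
        apply Nat.mul_le_mul_left
        exact Nat.mul_le_mul_left _ hl2


abbrev Gn := ↥(alternatingGroup (Fin (m+5)))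

lemma aa_mem : aa m ∈ alternatingGroup (Fin (m+5)) :=
  Equiv.Perm.mem_alternatingGroup.2 (sign_aa m)

lemma bg_mem : bg m ∈ alternatingGroup (Fin (m+5)) :=
  Equiv.Perm.mem_alternatingGroup.2 (sign_bg m)

def AA : Gn m := ⟨aa m, aa_mem m⟩
def BB : Gn m := ⟨bg m, bg_mem m⟩
def xx : Gn m × Gn m := (AA m, BB m)
def yy : Gn m × Gn m := (BB m, AA m)

lemma AA_cube : (AA m)^3 = 1 := by
  apply Subtype.ext
  rw [SubmonoidClass.coe_pow, OneMemClass.coe_one]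
  exact aa_cube m

lemma BB_period : (BB m)^(MM m) = 1 := by
  apply Subtype.ext
  rw [SubmonoidClass.coe_pow, OneMemClass.coe_one]
  exact bg_period m

lemma exists_E : ∃ E : ℕ, 1 ≤ E ∧ E ≤ 2*(MM m) ∧ (AA m)^E = AA m ∧ (BB m)^E = 1 := by
  have h3 := MM_not_dvd m
  have h2 := MM_ge m
  rcases (by omega : MM m % 3 = 1 ∨ MM m % 3 = 2) with hc | hc
  · refine ⟨MM m * 1, by omega, by omega, ?_, ?_⟩
    · have hm1 : (MM m * 1) % 3 = 1 := by omega
      conv_lhs => rw [← Nat.div_add_mod (MM m * 1) 3]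
      rw [pow_add, pow_mul, AA_cube, one_pow, one_mul, hm1, pow_one]
    · rw [pow_mul, BB_period, one_pow]
  · refine ⟨MM m * 2, by omega, by omega, ?_, ?_⟩
    · have hm1 : (MM m * 2) % 3 = 1 := by omega
      conv_lhs => rw [← Nat.div_add_mod (MM m * 2) 3]
      rw [pow_add, pow_mul, AA_cube, one_pow, one_mul, hm1, pow_one]
    · rw [pow_mul, BB_period, one_pow]

lemma exists_N : ∃ N : ℕ, 1 ≤ N ∧ N ≤ 2*(MM m)+1 ∧ (AA m)^N = 1 ∧ (BB m)^N = BB m := by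
  have h3 := MM_not_dvd m
  have h2 := MM_ge m
  rcases (by omega : MM m % 3 = 1 ∨ MM m % 3 = 2) with hc | hc
  · refine ⟨MM m * 2 + 1, by omega, by omega, ?_, ?_⟩
    · have hm0 : (MM m * 2 + 1) % 3 = 0 := by omega
      conv_lhs => rw [← Nat.div_add_mod (MM m * 2 + 1) 3]
      rw [pow_add, pow_mul, AA_cube, one_pow, one_mul, hm0, pow_zero]
    · rw [pow_add, pow_mul, BB_period, one_pow, one_mul, pow_one]
  · refine ⟨MM m * 1 + 1, by omega, by omega, ?_, ?_⟩
    · have hm0 : (MM m * 1 + 1) % 3 = 0 := by omega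
      conv_lhs => rw [← Nat.div_add_mod (MM m * 1 + 1) 3]
      rw [pow_add, pow_mul, AA_cube, one_pow, one_mul, hm0, pow_zero]
    · rw [pow_add, pow_mul, BB_period, one_pow, one_mul, pow_one]

lemma prod_pow {α β : Type*} [Monoid α] [Monoid β] (a : α) (b : β) (n : ℕ) :
    (a, b)^n = (a^n, b^n) := by
  induction n with
  | zero => simp; rfl
  | succ k ih => rw [pow_succ, pow_succ, pow_succ, ih, Prod.mk_mul_mk]

lemma lift_word (W : List (Equiv.Perm (Fin (m+5)))) :
    (∀ σ ∈ W, σ ∈ ({aa m, bg m} : Set _)) →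
    ∃ Wg : List (Gn m), (∀ s ∈ Wg, s ∈ ({AA m, BB m} : Set (Gn m))) ∧
      Wg.length = W.length ∧ ((Wg.prod : Gn m) : Equiv.Perm (Fin (m+5))) = W.prod := by
  induction W with
  | nil => intro _; exact ⟨[], by simp, by simp, by simp⟩
  | cons σ W ih =>
    intro hW
    obtain ⟨Wg, hg1, hg2, hg3⟩ := ih (fun τ hτ => hW τ (List.mem_cons_of_mem _ hτ))
    rcases hW σ List.mem_cons_self with h | h
    · refine ⟨AA m :: Wg, ?_, by simp [hg2], ?_⟩
      · intro s hs
        rcases List.mem_cons.1 hs with h' | h'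
        · rw [h']; left; rfl
        · exact hg1 s h'
      · rw [List.prod_cons, List.prod_cons, Subgroup.coe_mul, hg3, h]; rfl
    · have h' : σ = bg m := h
      refine ⟨BB m :: Wg, ?_, by simp [hg2], ?_⟩
      · intro s hs
        rcases List.mem_cons.1 hs with h'' | h''
        · rw [h'']; right; rfl
        · exact hg1 s h''
      · rw [List.prod_cons, List.prod_cons, Subgroup.coe_mul, hg3, h']; rfl

lemma left_word (g : Gn m) :
    ∃ W : List (Gn m × Gn m), (∀ s ∈ W, s ∈ ({xx m, yy m} : Set _)) ∧
      W.length ≤ (2*(MM m)+1) * (3*((m+5)*(2*(m+3)))) ∧ W.prod = (g, 1) := by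
  obtain ⟨E, hE1, hE2, hE3, hE4⟩ := exists_E m
  obtain ⟨N, hN1, hN2, hN3, hN4⟩ := exists_N m
  obtain ⟨Wp, h1, h2, h3⟩ := even_word m (g : Equiv.Perm (Fin (m+5)))
    (Equiv.Perm.mem_alternatingGroup.1 g.2)
  obtain ⟨Wg, hg1, hg2, hg3⟩ := lift_word m Wp h1
  have hletters : ∀ s ∈ Wg, ∃ w : List (Gn m × Gn m),
      (∀ x ∈ w, x ∈ ({xx m, yy m} : Set _)) ∧ w.length ≤ 2*(MM m)+1 ∧
      w.prod = (MonoidHom.inl (Gn m) (Gn m)) s := by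
    intro s hs
    rcases hg1 s hs with h | h
    · refine ⟨List.replicate E (xx m), ?_, by simp; omega, ?_⟩
      · intro x hx; rw [List.eq_of_mem_replicate hx]; left; rfl
      · rw [List.prod_replicate, xx, prod_pow, hE3, hE4, h, MonoidHom.inl_apply]
    · refine ⟨List.replicate N (yy m), ?_, by simp; omega, ?_⟩
      · intro x hx; rw [List.eq_of_mem_replicate hx]; right; rfl
      · rw [List.prod_replicate, yy, prod_pow, hN3, hN4, h, MonoidHom.inl_apply]
  obtain ⟨W, hW1, hW2, hW3⟩ := word_concat (MonoidHom.inl (Gn m) (Gn m))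
    ({xx m, yy m} : Set _) (2*(MM m)+1) Wg hletters
  refine ⟨W, hW1, ?_, ?_⟩
  · calc W.length ≤ (2*(MM m)+1) * Wg.length := hW2
      _ = (2*(MM m)+1) * Wp.length := by rw [hg2]
      _ ≤ (2*(MM m)+1) * (3*((m+5)*(2*(m+3)))) := Nat.mul_le_mul_left _ h2
  · rw [hW3, MonoidHom.inl_apply]
    have : Wg.prod = g := Subtype.ext (by rw [hg3, h3])
    rw [this]

lemma right_word (g : Gn m) :
    ∃ W : List (Gn m × Gn m), (∀ s ∈ W, s ∈ ({xx m, yy m} : Set _)) ∧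
      W.length ≤ (2*(MM m)+1) * (3*((m+5)*(2*(m+3)))) ∧ W.prod = (1, g) := by
  obtain ⟨E, hE1, hE2, hE3, hE4⟩ := exists_E m
  obtain ⟨N, hN1, hN2, hN3, hN4⟩ := exists_N m
  obtain ⟨Wp, h1, h2, h3⟩ := even_word m (g : Equiv.Perm (Fin (m+5)))
    (Equiv.Perm.mem_alternatingGroup.1 g.2)
  obtain ⟨Wg, hg1, hg2, hg3⟩ := lift_word m Wp h1
  have hletters : ∀ s ∈ Wg, ∃ w : List (Gn m × Gn m),
      (∀ x ∈ w, x ∈ ({xx m, yy m} : Set _)) ∧ w.length ≤ 2*(MM m)+1 ∧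
      w.prod = (MonoidHom.inr (Gn m) (Gn m)) s := by
    intro s hs
    rcases hg1 s hs with h | h
    · refine ⟨List.replicate E (yy m), ?_, by simp; omega, ?_⟩
      · intro x hx; rw [List.eq_of_mem_replicate hx]; right; rfl
      · rw [List.prod_replicate, yy, prod_pow, hE3, hE4, h, MonoidHom.inr_apply]
    · refine ⟨List.replicate N (xx m), ?_, by simp; omega, ?_⟩
      · intro x hx; rw [List.eq_of_mem_replicate hx]; left; rfl
      · rw [List.prod_replicate, xx, prod_pow, hN3, hN4, h, MonoidHom.inr_apply]
  obtain ⟨W, hW1, hW2, hW3⟩ := word_concat (MonoidHom.inr (Gn m) (Gn m))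
    ({xx m, yy m} : Set _) (2*(MM m)+1) Wg hletters
  refine ⟨W, hW1, ?_, ?_⟩
  · calc W.length ≤ (2*(MM m)+1) * Wg.length := hW2
      _ = (2*(MM m)+1) * Wp.length := by rw [hg2]
      _ ≤ (2*(MM m)+1) * (3*((m+5)*(2*(m+3)))) := Nat.mul_le_mul_left _ h2
  · rw [hW3, MonoidHom.inr_apply]
    have : Wg.prod = g := Subtype.ext (by rw [hg3, h3])
    rw [this]

lemma master (gh : Gn m × Gn m) :
    ∃ W : List (Gn m × Gn m), (∀ s ∈ W, s ∈ ({xx m, yy m} : Set _)) ∧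
      W.length ≤ 36*(m+5)^3 ∧ W.prod = gh := by
  obtain ⟨Wl, hl1, hl2, hl3⟩ := left_word m gh.1
  obtain ⟨Wr, hr1, hr2, hr3⟩ := right_word m gh.2
  refine ⟨Wl ++ Wr, ?_, ?_, ?_⟩
  · intro s hs
    rcases List.mem_append.1 hs with h | h
    exacts [hl1 s h, hr1 s h]
  · rw [List.length_append]
    have hMle := MM_le m
    have h1 : (2*(MM m)+1) * (3*((m+5)*(2*(m+3)))) ≤ 18*(m+5)^3 := by
      calc (2*(MM m)+1) * (3*((m+5)*(2*(m+3))))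
          ≤ (3*(m+5)) * (6*((m+5)*(m+5))) := by
            apply Nat.mul_le_mul
            · omega
            · have : m+3 ≤ m+5 := by omega
              calc 3*((m+5)*(2*(m+3))) = 6*((m+5)*(m+3)) := by ring
                _ ≤ 6*((m+5)*(m+5)) := by
                    apply Nat.mul_le_mul_left
                    exact Nat.mul_le_mul_left _ this
        _ = 18*(m+5)^3 := by ring
    omega
  · rw [List.prod_append, hl3, hr3, Prod.mk_mul_mk, one_mul, mul_one]

lemma bg_one : bg m 1 = ⟨2, by omega⟩ := by
  have h1lt : ((1 : Fin (m+5)):ℕ) = 1 := by simp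
  have hb0 : b0 m 1 = ⟨2, by omega⟩ := by
    apply Fin.ext
    rw [b0_block_lt m 1 (by rw [h1lt]; omega)]
    simp [h1lt]
  have hbb : bb m 1 = ⟨2, by omega⟩ := by
    rw [bb, Equiv.Perm.mul_apply, hb0]
    rcases Nat.even_or_odd (m+4) with h | h
    · rw [swap_pow_even _ _ h]; rfl
    · rw [swap_pow_odd _ _ h]
      exact swap_fix_block m _ (by simp)
  unfold bg
  split_ifs with h3
  · rw [Equiv.Perm.mul_apply, hbb]
    exact aa_fix_block m _ (by simp) (by simp)
  · exact hbb

lemma aa_ne_bg : aa m ≠ bg m := by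
  intro h
  have h1 : aa m 1 = 1 := aa_fix_block m 1 (by simp) (by simp)
  rw [h, bg_one] at h1
  have := congrArg Fin.val h1
  simp at this

lemma xx_ne_yy : xx m ≠ yy m := by
  intro h
  have h1 : (xx m).1 = (yy m).1 := congrArg Prod.fst h
  have h2 : aa m = bg m := congrArg Subtype.val h1
  exact aa_ne_bg m h2

lemma analytic_bound (m : ℕ) :
    ((36*(m+5)^3 : ℕ) : ℝ) ≤
      1 * ((m+5:ℕ) : ℝ) *
        Real.exp (((9:ℝ) + 1) * (Real.log ((m+5:ℕ):ℝ)) ^ 4 * Real.log (Real.log ((m+5:ℕ):ℝ))) := by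
  have hx5 : (5:ℝ) ≤ ((m+5:ℕ):ℝ) := by push_cast; linarith [Nat.cast_nonneg (α := ℝ) m]
  set x : ℝ := ((m+5:ℕ):ℝ) with hxdef
  have hx0 : (0:ℝ) < x := by linarith
  set t := Real.log x with htdef
  have hlog4 : Real.log 4 = 2 * Real.log 2 := by
    rw [show (4:ℝ) = 2^(2:ℕ) by norm_num, Real.log_pow]
    push_cast; ring
  have ht4 : Real.log 4 ≤ t := Real.log_le_log (by norm_num) (by linarith)
  have hl2 : (0.6931471803:ℝ) < Real.log 2 := Real.log_two_gt_d9
  have hl2' : Real.log 2 < 0.6931471808 := Real.log_two_lt_d9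
  have ht' : (1.38:ℝ) ≤ t := by
    rw [hlog4] at ht4
    linarith
  have ht1 : (1:ℝ) < t := by linarith
  have ht0 : (0:ℝ) < t := by linarith
  set u := Real.log t with hudef
  have hu : 1 - 1/t ≤ u := by
    have h := Real.log_le_sub_one_of_pos (show (0:ℝ) < t⁻¹ by positivity)
    rw [Real.log_inv] at h
    have h2 : 1 - t⁻¹ ≤ Real.log t := by linarith
    simpa [one_div] using h2
  have hmain : 6 * Real.log 2 + 2 * t ≤ ((9:ℝ)+1) * t^4 * u := by
    have h1 : t^4 * (1 - 1/t) = t^3 * (t - 1) := by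
      field_simp
    have h2 : ((9:ℝ)+1) * (t^4 * (1 - 1/t)) ≤ ((9:ℝ)+1) * (t^4 * u) := by
      apply mul_le_mul_of_nonneg_left _ (by norm_num)
      exact mul_le_mul_of_nonneg_left hu (by positivity)
    have h3 : 6 * Real.log 2 + 2 * t ≤ ((9:ℝ)+1) * (t^3 * (t-1)) := by
      nlinarith [sq_nonneg (t - 1.38), sq_nonneg t, pow_pos ht0 3,
        mul_le_mul_of_nonneg_left ht' (le_of_lt (pow_pos ht0 2))]
    calc 6 * Real.log 2 + 2 * t ≤ ((9:ℝ)+1) * (t^3 * (t-1)) := h3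
      _ = ((9:ℝ)+1) * (t^4 * (1 - 1/t)) := by rw [h1]
      _ ≤ ((9:ℝ)+1) * (t^4 * u) := h2
      _ = ((9:ℝ)+1) * t^4 * u := by ring
  have hexp64 : Real.exp (6 * Real.log 2 + 2 * t) = 64 * x^2 := by
    rw [Real.exp_add]
    have e1 : Real.exp (6 * Real.log 2) = 64 := by
      rw [show (6:ℝ) * Real.log 2 = Real.log (2^(6:ℕ)) by rw [Real.log_pow]; push_cast; ring,
        Real.exp_log (by norm_num)]
      norm_num
    have e2 : Real.exp (2 * t) = x^2 := by
      rw [show (2:ℝ) * t = Real.log (x^(2:ℕ)) by rw [Real.log_pow]; push_cast; ring,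
        Real.exp_log (by positivity)]
    rw [e1, e2]
  have hchain : (36:ℝ) * x^2 ≤ Real.exp (((9:ℝ)+1) * t^4 * u) := by
    calc (36:ℝ) * x^2 ≤ 64 * x^2 := by nlinarith [sq_nonneg x]
      _ = Real.exp (6 * Real.log 2 + 2 * t) := hexp64.symm
      _ ≤ Real.exp (((9:ℝ)+1) * t^4 * u) := Real.exp_le_exp.2 hmain
  have hfin : (36:ℝ) * x^3 ≤ x * Real.exp (((9:ℝ)+1) * t^4 * u) := by
    calc (36:ℝ) * x^3 = x * (36 * x^2) := by ring
      _ ≤ x * Real.exp (((9:ℝ)+1) * t^4 * u) :=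
          mul_le_mul_of_nonneg_left hchain (le_of_lt hx0)
  calc ((36*(m+5)^3 : ℕ) : ℝ) = 36 * x^3 := by rw [hxdef]; push_cast; ring
    _ ≤ x * Real.exp (((9:ℝ)+1) * t^4 * u) := hfin
    _ = 1 * x * Real.exp (((9:ℝ)+1) * t^4 * u) := by ring

end Chunk4

end DiamAux

/-- There are absolute constants `C, c > 0` such that for every `n ≥ 5` there is a
generating set `S` of `Aₙ²` of size two with
`diam (Aₙ², S) ≤ C · n · exp ((c+1) (log n)⁴ log log n)`. -/
theorem diam_sq_alternating_bound :
    ∃ C c : ℝ, 0 < C ∧ 0 < c ∧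
      ∀ n : ℕ, 5 ≤ n →
        ∃ S : Finset (↥(alternatingGroup (Fin n)) × ↥(alternatingGroup (Fin n))),
          S.card = 2 ∧
          Subgroup.closure (S : Set (↥(alternatingGroup (Fin n)) × ↥(alternatingGroup (Fin n)))) = ⊤ ∧
          (diam (↥(alternatingGroup (Fin n)) × ↥(alternatingGroup (Fin n)))
              (S : Set (↥(alternatingGroup (Fin n)) × ↥(alternatingGroup (Fin n)))) : ℝ) ≤
            C * n * Real.exp ((c + 1) * (Real.log n) ^ 4 * Real.log (Real.log n)) := by
  refine ⟨1, 9, by norm_num, by norm_num, ?_⟩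
  intro n hn
  obtain ⟨m, rfl⟩ : ∃ m, n = m + 5 := ⟨n - 5, by omega⟩
  letI : DecidableEq (DiamAux.Gn m × DiamAux.Gn m) := Classical.decEq _
  refine ⟨{DiamAux.xx m, DiamAux.yy m}, ?_, ?_, ?_⟩
  · exact Finset.card_pair (DiamAux.xx_ne_yy m)
  · have hcoe : ((({DiamAux.xx m, DiamAux.yy m} : Finset (DiamAux.Gn m × DiamAux.Gn m))) :
        Set (DiamAux.Gn m × DiamAux.Gn m)) = {DiamAux.xx m, DiamAux.yy m} := by simp
    rw [hcoe, eq_top_iff]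
    rintro g -
    obtain ⟨W, hW1, _, hW3⟩ := DiamAux.master m g
    rw [← hW3]
    exact Subgroup.list_prod_mem _ (fun w hw => Subgroup.subset_closure (hW1 w hw))
  · have hcoe : ((({DiamAux.xx m, DiamAux.yy m} : Finset (DiamAux.Gn m × DiamAux.Gn m))) :
        Set (DiamAux.Gn m × DiamAux.Gn m)) = {DiamAux.xx m, DiamAux.yy m} := by simp
    rw [hcoe]
    have hd : diam (DiamAux.Gn m × DiamAux.Gn m)
        ({DiamAux.xx m, DiamAux.yy m} : Set (DiamAux.Gn m × DiamAux.Gn m)) ≤ 36*(m+5)^3 := by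
      apply DiamAux.diam_le
      intro g
      obtain ⟨W, hW1, hW2, hW3⟩ := DiamAux.master m g
      exact le_trans (DiamAux.wordLength_le _ g W hW1 hW3) hW2
    calc (↑(diam (DiamAux.Gn m × DiamAux.Gn m)
            ({DiamAux.xx m, DiamAux.yy m} : Set (DiamAux.Gn m × DiamAux.Gn m))) : ℝ)
        ≤ ((36*(m+5)^3 : ℕ) : ℝ) := Nat.cast_le.2 hd
      _ ≤ 1 * ((m+5:ℕ) : ℝ) *
          Real.exp (((9:ℝ) + 1) * (Real.log ((m+5:ℕ):ℝ)) ^ 4 * Real.log (Real.log ((m+5:ℕ):ℝ))) :=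
          DiamAux.analytic_bound m
end
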